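/- arXiv:1907.09587 — 5 statements merged into one kernel-verified Lean document; each statement's English description precedes it below -/
import Mathlib

section
/- The number of cycles of a uniformly random permutation of [n] has the same distribution as the sum B_1 + B_2 + ⋯ + B_n of independent Bernoulli random variables where B_i has success probability 1/i. -/
open MeasureTheory ProbabilityTheory
open scoped ENNReal

section Aux
open Finset Equiv
open scoped Classical

/-- The number of cycles of a permutation of `Fin n` (including fixed points),
counted as the number of cycle minima. -/
noncomputable def numCycles {n : ℕ} (π : Equiv.Perm (Fin n)) : ℕ :=
  Nat.card {a : Fin n // ∀ m : ℕ, a ≤ (⇑π)^[m] a}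

def IsMin' {n : ℕ} (π : Equiv.Perm (Fin n)) (a : Fin n) : Prop := ∀ m : ℕ, a ≤ (⇑π)^[m] a

lemma isMin'_iff {n : ℕ} (π : Equiv.Perm (Fin n)) (a : Fin n) :
    IsMin' π a ↔ ∀ b, π.SameCycle a b → a ≤ b := by
  constructor
  · intro h b hb
    obtain ⟨i, hi, rfl⟩ := hb.exists_pow_eq'
    rw [← Equiv.Perm.iterate_eq_pow] at *
    exact h i
  · intro h m
    exact h _ ⟨(m : ℤ), by simp; rw [Equiv.Perm.iterate_eq_pow]⟩

lemma numCycles_eq_sum {n : ℕ} (π : Equiv.Perm (Fin n)) :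
    numCycles π = ∑ a : Fin n, if IsMin' π a then 1 else 0 := by
  rw [numCycles, Nat.card_eq_fintype_card, Fintype.card_subtype, Finset.card_filter]
  rfl

section Crux
variable {n : ℕ} (q : Fin n) (e : Equiv.Perm (Fin n))

local notation "π" => Equiv.Perm.decomposeFin.symm (q.succ, e)

lemma pi_zero : π 0 = q.succ := Equiv.Perm.decomposeFin_symm_apply_zero _ _

lemma pi_succ (i : Fin n) : π i.succ = if e i = q then 0 else (e i).succ := by
  rw [Equiv.Perm.decomposeFin_symm_apply_succ]
  split_ifs with h
  · rw [h, Equiv.swap_apply_right]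
  · exact Equiv.swap_apply_of_ne_of_ne (Fin.succ_ne_zero _) (by simpa [Fin.succ_inj] using h)

lemma lemA' (i : Fin n) : ∀ m : ℕ, (π).SameCycle i.succ ((⇑e)^[m] i).succ := by
  intro m
  induction m with
  | zero => exact Equiv.Perm.SameCycle.refl _ _
  | succ m ih =>
    rw [Function.iterate_succ_apply']
    by_cases hq : e ((⇑e)^[m] i) = q
    · rw [hq]
      refine ih.trans (Equiv.Perm.SameCycle.trans (y := 0) ⟨1, ?_⟩ ⟨1, ?_⟩)
      · simp only [zpow_one]
        rw [pi_succ, if_pos hq]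
      · simp only [zpow_one]
        exact pi_zero q e
    · refine ih.trans ⟨1, ?_⟩
      simp only [zpow_one]
      rw [pi_succ, if_neg hq]

lemma lemA {i j : Fin n} (h : e.SameCycle i j) : (π).SameCycle i.succ j.succ := by
  obtain ⟨m, hm, rfl⟩ := h.exists_pow_eq'
  rw [← Equiv.Perm.iterate_eq_pow]
  exact lemA' q e i m

lemma lemB : ∀ (m : ℕ) (a : Fin (n+1)) (j : Fin n), (⇑π)^[m] a = j.succ →
    (a = 0 → e.SameCycle q j) ∧ (∀ i, a = i.succ → e.SameCycle i j) := by
  intro m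
  induction m with
  | zero =>
    intro a j h
    simp only [Function.iterate_zero_apply] at h
    subst h
    constructor
    · intro h0; exact absurd h0 (Fin.succ_ne_zero _)
    · intro i hi
      rw [Fin.succ_inj] at hi
      exact hi ▸ Equiv.Perm.SameCycle.refl _ _
  | succ m ih =>
    intro a j h
    rw [Function.iterate_succ_apply] at h
    constructor
    · rintro rfl
      rw [pi_zero] at h
      exact (ih _ _ h).2 q rfl
    · rintro i rfl
      rw [pi_succ] at h
      by_cases hq : e i = q
      · rw [if_pos hq] at h
        have h2 := (ih _ _ h).1 rfl
        exact (Equiv.Perm.SameCycle.trans ⟨1, by simp [hq]⟩ h2)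
      · rw [if_neg hq] at h
        exact Equiv.Perm.sameCycle_apply_left.mp ((ih _ _ h).2 _ rfl)

lemma lemD {i : Fin n} (h : (π).SameCycle i.succ 0) : e.SameCycle i q := by
  obtain ⟨m, hm, hme⟩ := h.exists_pow_eq'
  rw [← Equiv.Perm.iterate_eq_pow] at hme
  have : (⇑π)^[m+1] i.succ = q.succ := by
    rw [Function.iterate_succ_apply', hme, pi_zero]
  exact (lemB q e (m+1) _ _ this).2 i rfl

lemma lemE {i : Fin n} (h : e.SameCycle i q) : (π).SameCycle i.succ 0 := by
  refine (lemA q e h).trans (Equiv.Perm.SameCycle.symm ⟨1, ?_⟩)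
  simp only [zpow_one]
  exact pi_zero q e

lemma isMin'_pi_zero : IsMin' π 0 := fun _ => Fin.zero_le _

lemma isMin'_pi_succ (i : Fin n) :
    IsMin' π i.succ ↔ IsMin' e i ∧ ¬ e.SameCycle i q := by
  rw [isMin'_iff, isMin'_iff]
  constructor
  · intro h
    constructor
    · intro j hj
      have := h j.succ (lemA q e hj)
      rwa [Fin.succ_le_succ_iff] at this
    · intro hsc
      have := h 0 (lemE q e hsc)
      simp [Fin.le_zero_iff] at this
  · rintro ⟨h1, h2⟩ b hb
    obtain ⟨m, hm, rfl⟩ := hb.exists_pow_eq'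
    rw [← Equiv.Perm.iterate_eq_pow]
    rcases Fin.eq_zero_or_eq_succ ((⇑π)^[m] i.succ) with h0 | ⟨j, hj⟩
    · exact absurd (lemD q e ⟨(m : ℤ), by simpa [← Equiv.Perm.iterate_eq_pow] using h0⟩) h2
    · rw [hj, Fin.succ_le_succ_iff]
      exact h1 j ((lemB q e m _ _ hj).2 i rfl)

end Crux

lemma unique_min_card {n : ℕ} (e : Equiv.Perm (Fin n)) (q : Fin n) :
    (univ.filter (fun i => IsMin' e i ∧ e.SameCycle i q)).card = 1 := by
  have hne : (univ.filter (fun i => e.SameCycle i q)).Nonempty :=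
    ⟨q, by simp [Equiv.Perm.SameCycle.refl]⟩
  set F := univ.filter (fun i => e.SameCycle i q) with hF
  set m0 := F.min' hne with hm0
  have hm0F : m0 ∈ F := F.min'_mem hne
  have hm0sc : e.SameCycle m0 q := by
    rw [hF, mem_filter] at hm0F
    exact hm0F.2
  have hm0min : IsMin' e m0 := by
    rw [isMin'_iff]
    intro b hb
    apply F.min'_le
    rw [hF, mem_filter]
    exact ⟨mem_univ _, hb.symm.trans hm0sc⟩
  rw [Finset.card_eq_one]
  refine ⟨m0, ?_⟩
  ext i
  simp only [mem_filter, mem_univ, true_and, mem_singleton]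
  constructor
  · rintro ⟨h1, h2⟩
    have hsc : e.SameCycle i m0 := h2.trans hm0sc.symm
    exact le_antisymm ((isMin'_iff e i).1 h1 m0 hsc) ((isMin'_iff e m0).1 hm0min i hsc.symm)
  · rintro rfl; exact ⟨hm0min, hm0sc⟩

lemma crux {n : ℕ} (p : Fin (n+1)) (e : Equiv.Perm (Fin n)) :
    numCycles (Equiv.Perm.decomposeFin.symm (p, e))
      = numCycles e + if p = 0 then 1 else 0 := by
  by_cases hp : p = 0
  · subst hp
    set π := Equiv.Perm.decomposeFin.symm ((0 : Fin (n+1)), e) with hπ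
    have hs : ∀ i : Fin n, π i.succ = (e i).succ := by
      intro i
      rw [hπ, Equiv.Perm.decomposeFin_symm_apply_succ, Equiv.swap_self]
      rfl
    have hiter : ∀ (m : ℕ) (i : Fin n), (⇑π)^[m] i.succ = ((⇑e)^[m] i).succ := by
      intro m
      induction m with
      | zero => intro i; simp
      | succ m ih =>
        intro i
        rw [Function.iterate_succ_apply, Function.iterate_succ_apply, hs, ih]
    have hmin : ∀ i : Fin n, IsMin' π i.succ ↔ IsMin' e i := by
      intro i
      constructor
      · intro h m
        have := h m
        rw [hiter] at this
        exact Fin.succ_le_succ_iff.1 this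
      · intro h m
        rw [hiter]
        exact Fin.succ_le_succ_iff.2 (h m)
    have h0 : IsMin' π 0 := fun _ => Fin.zero_le _
    rw [numCycles_eq_sum, numCycles_eq_sum, Fin.sum_univ_succ, if_pos h0]
    simp only [hmin, if_pos rfl]
    simp
    omega
  · obtain ⟨q, rfl⟩ := Fin.eq_succ_of_ne_zero hp
    rw [if_neg hp, add_zero]
    rw [numCycles_eq_sum, numCycles_eq_sum, Fin.sum_univ_succ,
      if_pos (isMin'_pi_zero q e)]
    simp only [isMin'_pi_succ]
    have split : ∀ i : Fin n, (if IsMin' e i then 1 else 0)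
        = (if IsMin' e i ∧ e.SameCycle i q then 1 else 0)
          + (if IsMin' e i ∧ ¬ e.SameCycle i q then 1 else 0) := by
      intro i
      by_cases h1 : IsMin' e i <;> by_cases h2 : e.SameCycle i q <;> simp [h1, h2]
    rw [Finset.sum_congr rfl (fun i _ => split i), Finset.sum_add_distrib,
      show (∑ i : Fin n, if IsMin' e i ∧ e.SameCycle i q then 1 else 0) = 1 from by
        rw [← Finset.card_filter]; exact unique_min_card e q]

def stir : ℕ → ℕ → ℕ
  | 0, 0 => 1
  | 0, _+1 => 0
  | n+1, 0 => n * stir n 0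
  | n+1, k+1 => n * stir n (k+1) + stir n k

lemma nat_card_setOf {α : Type*} [Fintype α] (P : α → Prop) [DecidablePred P] :
    Nat.card {a : α | P a} = ∑ a : α, if P a then 1 else 0 := by
  rw [show Nat.card {a : α | P a} = Nat.card {a : α // P a} from rfl,
    Nat.card_eq_fintype_card, Fintype.card_subtype, Finset.card_filter]

lemma card_perm_numCycles (n k : ℕ) :
    Nat.card {π : Equiv.Perm (Fin n) | numCycles π = k} = stir n k := by
  induction n generalizing k with
  | zero =>
    have h1 : ∀ π : Equiv.Perm (Fin 0), numCycles π = 0 := by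
      intro π
      simp [numCycles_eq_sum]
    rw [nat_card_setOf]
    cases k with
    | zero => simp [h1, stir, Finset.card_univ, Fintype.card_perm]
    | succ k => simp [h1, stir]
  | succ n ih =>
    have key : Nat.card {π : Equiv.Perm (Fin (n+1)) | numCycles π = k}
        = Nat.card {x : Fin (n+1) × Equiv.Perm (Fin n) |
            numCycles (Equiv.Perm.decomposeFin.symm x) = k} := by
      refine Nat.card_congr (Equiv.subtypeEquiv Equiv.Perm.decomposeFin fun π => ?_)
      simp only [Set.mem_setOf_eq, Equiv.symm_apply_apply]
    rw [key, nat_card_setOf, Fintype.sum_prod_type, Fin.sum_univ_succ]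
    have hzero : (∑ e : Equiv.Perm (Fin n),
        if numCycles (Equiv.Perm.decomposeFin.symm ((0 : Fin (n+1)), e)) = k then 1 else 0)
        = ∑ e : Equiv.Perm (Fin n), if numCycles e + 1 = k then 1 else 0 := by
      refine Finset.sum_congr rfl fun e _ => ?_
      rw [crux, if_pos rfl]
    have hsucc : ∀ j : Fin n, (∑ e : Equiv.Perm (Fin n),
        if numCycles (Equiv.Perm.decomposeFin.symm ((j.succ : Fin (n+1)), e)) = k then 1 else 0)
        = stir n k := by
      intro j
      rw [Finset.sum_congr rfl fun e _ => by
        rw [crux, if_neg (Fin.succ_ne_zero j), add_zero]]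
      rw [← nat_card_setOf]
      exact ih k
    rw [hzero, Finset.sum_congr rfl fun j _ => hsucc j, Finset.sum_const, Finset.card_univ,
      Fintype.card_fin, smul_eq_mul]
    cases k with
    | zero =>
      have h0 : ∀ e : Equiv.Perm (Fin n), ¬ (numCycles e + 1 = 0) := by omega
      simp only [h0, if_false, Finset.sum_const_zero, zero_add]
      rfl
    | succ k =>
      have heq : ∀ e : Equiv.Perm (Fin n), (numCycles e + 1 = k + 1) ↔ numCycles e = k := by
        omega
      simp only [heq]
      rw [← nat_card_setOf, ih k]
      show stir n k + n * stir n (k+1) = stir (n+1) (k+1)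
      rw [show stir (n+1) (k+1) = n * stir n (k+1) + stir n k from rfl]
      omega

section Prob
variable {n : ℕ} {Ω : Type*} [MeasurableSpace Ω] {μ : Measure Ω} [IsProbabilityMeasure μ]
  {B : Fin n → Ω → ℕ}

lemma measB1 (hp : ∀ i : Fin n, μ {ω | B i ω = 1} = ENNReal.ofReal (1 / ((i : ℕ) + 1)))
    (a : Fin n) : μ {ω | B a ω = 1} = (((a : ℕ) + 1 : ℕ) : ℝ≥0∞)⁻¹ := by
  rw [hp a, one_div, ENNReal.ofReal_inv_of_pos (by positivity)]
  congr 1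
  rw [show ((a : ℕ) + 1 : ℝ) = (((a : ℕ) + 1 : ℕ) : ℝ) by push_cast; ring,
    ENNReal.ofReal_natCast]

lemma measB0 (hmeas : ∀ i, Measurable (B i)) (hval : ∀ i ω, B i ω ≤ 1)
    (hp : ∀ i : Fin n, μ {ω | B i ω = 1} = ENNReal.ofReal (1 / ((i : ℕ) + 1)))
    (a : Fin n) :
    μ {ω | B a ω = 0} = ((a : ℕ) : ℝ≥0∞) * (((a : ℕ) + 1 : ℕ) : ℝ≥0∞)⁻¹ := by
  have hcompl : {ω | B a ω = 0} = {ω | B a ω = 1}ᶜ := by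
    ext ω
    have := hval a ω
    simp only [Set.mem_setOf_eq, Set.mem_compl_iff]
    omega
  have hms : MeasurableSet {ω | B a ω = 1} :=
    (hmeas a) (measurableSet_singleton 1)
  rw [hcompl, measure_compl hms (measure_ne_top μ _), measB1 hp a]
  have h1 : (((a : ℕ) + 1 : ℕ) : ℝ≥0∞) ≠ 0 := by simp
  have h2 : (((a : ℕ) + 1 : ℕ) : ℝ≥0∞) ≠ ∞ := by simp
  rw [ENNReal.sub_eq_of_eq_add (by simp [ENNReal.inv_ne_top, h2])]
  rw [measure_univ,
    show ((a:ℕ) : ℝ≥0∞) * (((a:ℕ)+1:ℕ) : ℝ≥0∞)⁻¹ + (((a:ℕ)+1:ℕ) : ℝ≥0∞)⁻¹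
      = (((a:ℕ) : ℝ≥0∞) + 1) * (((a:ℕ)+1:ℕ) : ℝ≥0∞)⁻¹ by rw [add_mul, one_mul],
    show ((a:ℕ) : ℝ≥0∞) + 1 = (((a:ℕ)+1:ℕ) : ℝ≥0∞) by push_cast; ring,
    ENNReal.mul_inv_cancel h1 h2]
end Prob

section Prob2
variable {n : ℕ} {Ω : Type*} [MeasurableSpace Ω] {μ : Measure Ω} [IsProbabilityMeasure μ]
  {B : Fin n → Ω → ℕ}

lemma prob_main (hmeas : ∀ i, Measurable (B i))
    (hind : iIndepFun B μ)
    (hval : ∀ i ω, B i ω ≤ 1)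
    (hp : ∀ i : Fin n, μ {ω | B i ω = 1} = ENNReal.ofReal (1 / ((i : ℕ) + 1))) :
    ∀ (m : ℕ), m ≤ n → ∀ k : ℕ,
      μ {ω | ∑ i ∈ univ.filter (fun i : Fin n => (i:ℕ) < m), B i ω = k}
        * (m.factorial : ℝ≥0∞) = stir m k := by
  intro m
  induction m with
  | zero =>
    intro _ k
    have hfe : univ.filter (fun i : Fin n => (i:ℕ) < 0) = ∅ := by
      ext i; simp
    rw [hfe]
    simp only [Finset.sum_empty]
    cases k with
    | zero =>
      have : {ω : Ω | 0 = 0} = Set.univ := by ext ω; simp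
      rw [this]
      simp [stir]
    | succ k =>
      have : {ω : Ω | 0 = k + 1} = ∅ := by ext ω; simp
      rw [this]
      simp [stir]
  | succ m ih =>
    intro hm k
    have hmn : m < n := hm
    set a : Fin n := ⟨m, hmn⟩ with ha
    set s := univ.filter (fun i : Fin n => (i:ℕ) < m) with hs
    have hans : a ∉ s := by simp [hs, ha]
    have hfe : univ.filter (fun i : Fin n => (i:ℕ) < m+1) = insert a s := by
      ext i
      simp only [mem_filter, mem_univ, true_and, mem_insert, hs, ha, Fin.ext_iff]
      omega
    have hIF := (hind.indepFun_finsetSum_of_notMem hmeas hans).symm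
    have hinter : ∀ (v j : ℕ), μ ({ω | B a ω = v} ∩ {ω | ∑ i ∈ s, B i ω = j})
        = μ {ω | B a ω = v} * μ {ω | ∑ i ∈ s, B i ω = j} := by
      intro v j
      have h2 := hIF.measure_inter_preimage_eq_mul (s := {v}) (t := {j})
        (measurableSet_singleton _) (measurableSet_singleton _)
      have e1 : (B a) ⁻¹' {v} = {ω | B a ω = v} := rfl
      have e2 : (∑ j' ∈ s, B j') ⁻¹' ({j} : Set ℕ) = {ω | ∑ i ∈ s, B i ω = j} := by
        ext ω
        simp [Finset.sum_apply]
      rwa [e1, e2] at h2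
    have hmeassum : MeasurableSet {ω | ∑ i ∈ s, B i ω = k} := by
      exact (Finset.measurable_sum s (fun i _ => hmeas i)) (measurableSet_singleton k)
    -- basic constants
    have hN0 : (((m:ℕ) + 1 : ℕ) : ℝ≥0∞) ≠ 0 := by simp
    have hNt : (((m:ℕ) + 1 : ℕ) : ℝ≥0∞) ≠ ∞ := by simp
    have hNN : ((((m:ℕ) + 1 : ℕ) : ℝ≥0∞))⁻¹ * (((m:ℕ) + 1 : ℕ) : ℝ≥0∞) = 1 :=
      ENNReal.inv_mul_cancel hN0 hNt
    have hB1 := measB1 hp a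
    have hB0 := measB0 hmeas hval hp a
    have hav : (a : ℕ) = m := rfl
    rw [hav] at hB1 hB0
    have hfact : ((m+1).factorial : ℝ≥0∞)
        = (((m:ℕ) + 1 : ℕ) : ℝ≥0∞) * (m.factorial : ℝ≥0∞) := by
      rw [Nat.factorial_succ]
      push_cast
      ring
    rw [hfe]
    have hsum : ∀ ω, ∑ i ∈ insert a s, B i ω = B a ω + ∑ i ∈ s, B i ω := by
      intro ω
      rw [Finset.sum_insert hans]
    cases k with
    | zero =>
      have hset : {ω | ∑ i ∈ insert a s, B i ω = 0}
          = {ω | B a ω = 0} ∩ {ω | ∑ i ∈ s, B i ω = 0} := by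
        ext ω
        simp only [Set.mem_setOf_eq, Set.mem_inter_iff, hsum ω]
        omega
      rw [hset, hinter 0 0, hB0, hfact]
      have := ih (le_of_lt hmn) 0
      calc ((m:ℕ) : ℝ≥0∞) * ((((m:ℕ)+1:ℕ)) : ℝ≥0∞)⁻¹ * μ {ω | ∑ i ∈ s, B i ω = 0}
            * (((((m:ℕ)+1:ℕ) : ℝ≥0∞)) * (m.factorial : ℝ≥0∞))
          = (((((m:ℕ)+1:ℕ)) : ℝ≥0∞)⁻¹ * ((((m:ℕ)+1:ℕ)) : ℝ≥0∞))
            * (((m:ℕ) : ℝ≥0∞) * (μ {ω | ∑ i ∈ s, B i ω = 0} * (m.factorial : ℝ≥0∞))) := by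
            ring
        _ = ((m:ℕ) : ℝ≥0∞) * (stir m 0 : ℝ≥0∞) := by rw [hNN, one_mul, this]
        _ = (stir (m+1) 0 : ℝ≥0∞) := by
            rw [show stir (m+1) 0 = m * stir m 0 from rfl]
            push_cast
            ring
    | succ k =>
      have hset : {ω | ∑ i ∈ insert a s, B i ω = k + 1}
          = ({ω | B a ω = 1} ∩ {ω | ∑ i ∈ s, B i ω = k})
            ∪ ({ω | B a ω = 0} ∩ {ω | ∑ i ∈ s, B i ω = k + 1}) := by
        ext ω
        have h01 := hval a ω
        simp only [Set.mem_setOf_eq, Set.mem_inter_iff, Set.mem_union, hsum ω]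
        omega
      have hdisj : Disjoint ({ω | B a ω = 1} ∩ {ω | ∑ i ∈ s, B i ω = k})
          (({ω | B a ω = 0} ∩ {ω | ∑ i ∈ s, B i ω = k + 1}) : Set Ω) := by
        rw [Set.disjoint_left]
        rintro ω ⟨h1, _⟩ ⟨h2, _⟩
        simp only [Set.mem_setOf_eq] at h1 h2
        omega
      have hmeas2 : MeasurableSet (({ω | B a ω = 0} ∩ {ω | ∑ i ∈ s, B i ω = k + 1}) : Set Ω) := by
        exact ((hmeas a) (measurableSet_singleton 0)).inter
          ((Finset.measurable_sum s (fun i _ => hmeas i)) (measurableSet_singleton (k+1)))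
      rw [hset, measure_union hdisj hmeas2, hinter 1 k, hinter 0 (k+1), hB1, hB0, hfact]
      have ihk := ih (le_of_lt hmn) k
      have ihk1 := ih (le_of_lt hmn) (k+1)
      calc ((((m:ℕ)+1:ℕ) : ℝ≥0∞)⁻¹ * μ {ω | ∑ i ∈ s, B i ω = k}
            + ((m:ℕ) : ℝ≥0∞) * ((((m:ℕ)+1:ℕ)) : ℝ≥0∞)⁻¹ * μ {ω | ∑ i ∈ s, B i ω = k + 1})
            * (((((m:ℕ)+1:ℕ)) : ℝ≥0∞) * (m.factorial : ℝ≥0∞))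
          = (((((m:ℕ)+1:ℕ)) : ℝ≥0∞)⁻¹ * ((((m:ℕ)+1:ℕ)) : ℝ≥0∞))
              * (μ {ω | ∑ i ∈ s, B i ω = k} * (m.factorial : ℝ≥0∞))
            + (((((m:ℕ)+1:ℕ)) : ℝ≥0∞)⁻¹ * ((((m:ℕ)+1:ℕ)) : ℝ≥0∞))
              * (((m:ℕ) : ℝ≥0∞) * (μ {ω | ∑ i ∈ s, B i ω = k + 1} * (m.factorial : ℝ≥0∞))) := by
            ring
        _ = (stir m k : ℝ≥0∞) + ((m:ℕ) : ℝ≥0∞) * (stir m (k+1) : ℝ≥0∞) := by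
            rw [hNN, one_mul, one_mul, ihk, ihk1]
        _ = (stir (m+1) (k+1) : ℝ≥0∞) := by
            rw [show stir (m+1) (k+1) = m * stir m (k+1) + stir m k from rfl]
            push_cast
            ring
end Prob2


end Aux

section Main
open Finset
open scoped Classical

/-- The number of cycles of a uniformly random permutation of `[n]` has the same
distribution as `B_1 + ⋯ + B_n`, where the `B_i` are independent Bernoulli
variables with `P(B_i = 1) = 1/i` (here `i : Fin n` corresponds to `i+1`). -/
theorem numCycles_eq_sum_bernoulli (n : ℕ)
    {Ω : Type*} [MeasurableSpace Ω] (μ : Measure Ω) [IsProbabilityMeasure μ]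
    (B : Fin n → Ω → ℕ) (hmeas : ∀ i, Measurable (B i))
    (hind : iIndepFun B μ)
    (hval : ∀ i ω, B i ω ≤ 1)
    (hp : ∀ i : Fin n, μ {ω | B i ω = 1} = ENNReal.ofReal (1 / ((i : ℕ) + 1))) :
    ∀ k : ℕ, μ {ω | ∑ i, B i ω = k}
      = (Nat.card {π : Equiv.Perm (Fin n) | numCycles π = k} : ℝ≥0∞) / n.factorial := by
  intro k
  have h := prob_main hmeas hind hval hp n le_rfl k
  have hfe : univ.filter (fun i : Fin n => (i:ℕ) < n) = univ := by
    apply Finset.filter_true_of_mem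
    intro i _
    exact i.isLt
  rw [hfe] at h
  rw [card_perm_numCycles n k]
  have hf0 : ((n.factorial : ℕ) : ℝ≥0∞) ≠ 0 := by
    simp [Nat.factorial_ne_zero]
  have hft : ((n.factorial : ℕ) : ℝ≥0∞) ≠ ∞ := by simp
  rw [ENNReal.eq_div_iff hf0 hft, mul_comm]
  exact h

end Main
end

section
/- Fix θ > 0 and n ≥ 1. The function on [0,1]^n given by (u_1,...,u_n) ↦ θ^{K_n(u)} (min(u_1,...,u_n))^{θ−1}, where K_n(u) is the number of lower records in the sequence (u_1,...,u_n), integrates to 1 against Lebesgue measure on [0,1]^n, i.e. it is a probability density. -/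
open MeasureTheory
open scoped ENNReal

/-- The number of lower records of the finite sequence `u : Fin n → ℝ`
(index `0` always counts). -/
noncomputable def numRecords {n : ℕ} (u : Fin n → ℝ) : ℕ :=
  Nat.card {i : Fin n // ∀ j, j < i → u i < u j}

open Classical in
lemma numRecords_eq_sum {n : ℕ} (u : Fin n → ℝ) :
    numRecords u = ∑ i : Fin n, if ∀ j, j < i → u i < u j then 1 else 0 := by
  rw [numRecords, Nat.card_eq_fintype_card, Fintype.card_subtype, Finset.card_filter]

open Classical in
lemma pow_numRecords {n : ℕ} (θ : ℝ) (u : Fin n → ℝ) :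
    θ ^ numRecords u = ∏ i : Fin n, if ∀ j, j < i → u i < u j then θ else 1 := by
  rw [numRecords_eq_sum, ← Finset.prod_pow_eq_pow_sum]
  exact Finset.prod_congr rfl fun i _ => by split <;> simp

lemma measurable_rpow_const (c : ℝ) : Measurable fun x : ℝ => x ^ c := by
  have h : (fun x : ℝ => x ^ c) = fun x =>
      if x = 0 then (if c = 0 then 1 else 0)
      else Real.exp (Real.log x * c) * (if x < 0 then Real.cos (c * Real.pi) else 1) := by
    funext x
    rcases lt_trichotomy x 0 with hx | rfl | hx
    · rw [if_neg hx.ne, if_pos hx, Real.rpow_def_of_neg hx, mul_comm c Real.pi]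
    · by_cases hc : c = 0
      · simp [hc]
      · simp [Real.zero_rpow hc, hc]
    · rw [if_neg hx.ne', if_neg (not_lt.2 hx.le), Real.rpow_def_of_pos hx, mul_one]
  rw [h]
  refine Measurable.ite (measurableSet_eq) measurable_const ?_
  exact (Real.measurable_exp.comp (Real.measurable_log.mul_const c)).mul
    (Measurable.ite measurableSet_Iio measurable_const measurable_const)

lemma measurable_integrand {n : ℕ} (θ : ℝ) :
    Measurable fun u : Fin n → ℝ => θ ^ numRecords u * (⨅ i, u i) ^ (θ - 1) := by
  classical
  apply Measurable.mul
  · simp only [pow_numRecords]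
    apply Finset.measurable_prod
    intro i _
    have hs : MeasurableSet {u : Fin n → ℝ | ∀ j, j < i → u i < u j} := by
      have : {u : Fin n → ℝ | ∀ j, j < i → u i < u j}
          = ⋂ j, ⋂ (_ : j < i), {u : Fin n → ℝ | u i < u j} := by
        ext u; simp
      rw [this]
      exact MeasurableSet.iInter fun j => MeasurableSet.iInter fun _ =>
        measurableSet_lt (measurable_pi_apply i) (measurable_pi_apply j)
    exact Measurable.ite hs measurable_const measurable_const
  · exact (measurable_rpow_const (θ - 1)).comp (Measurable.iInf fun i => measurable_pi_apply i)

lemma iInf_snoc {n : ℕ} (hn : 0 < n) (v : Fin n → ℝ) (x : ℝ) :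
    ⨅ i, (Fin.snoc v x : Fin (n + 1) → ℝ) i = min (⨅ i, v i) x := by
  have : Nonempty (Fin n) := ⟨⟨0, hn⟩⟩
  apply le_antisymm
  · apply le_min
    · exact le_ciInf fun i =>
        (ciInf_le (Set.finite_range _).bddBelow (Fin.castSucc i)).trans_eq (by simp)
    · exact (ciInf_le (Set.finite_range _).bddBelow (Fin.last n)).trans_eq (by simp)
  · apply le_ciInf
    intro i
    refine Fin.lastCases ?_ ?_ i
    · simpa using min_le_right _ _
    · intro j
      simpa using (min_le_left _ _).trans (ciInf_le (Set.finite_range v).bddBelow j)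

lemma lt_iInf_iff' {n : ℕ} (hn : 0 < n) (v : Fin n → ℝ) (x : ℝ) :
    x < (⨅ i, v i) ↔ ∀ i, x < v i := by
  have : Nonempty (Fin n) := ⟨⟨0, hn⟩⟩
  constructor
  · intro h i; exact h.trans_le (ciInf_le (Set.finite_range v).bddBelow i)
  · intro h
    obtain ⟨i, hi⟩ := Finite.exists_min v
    exact (h i).trans_le (le_ciInf hi)

lemma numRecords_snoc {n : ℕ} (v : Fin n → ℝ) (x : ℝ) :
    numRecords (Fin.snoc v x : Fin (n + 1) → ℝ)
      = numRecords v + (if ∀ i, x < v i then 1 else 0) := by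
  classical
  rw [numRecords_eq_sum, numRecords_eq_sum, Fin.sum_univ_castSucc]
  congr 1
  · apply Finset.sum_congr rfl
    intro i _
    have hiff : (∀ j, j < Fin.castSucc i →
          (Fin.snoc v x : Fin (n + 1) → ℝ) (Fin.castSucc i) < (Fin.snoc v x : Fin (n + 1) → ℝ) j)
        ↔ (∀ j, j < i → v i < v j) := by
      constructor
      · intro h j hj
        have := h (Fin.castSucc j) (Fin.castSucc_lt_castSucc_iff.2 hj)
        simpa using this
      · intro h j hj
        have hj' : j ≠ Fin.last n := by
          intro e; subst e
          exact absurd (hj.trans (Fin.castSucc_lt_last i)) (lt_irrefl _)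
        obtain ⟨j', rfl⟩ := Fin.exists_castSucc_eq.2 hj'
        rw [Fin.snoc_castSucc, Fin.snoc_castSucc]
        exact h j' (Fin.castSucc_lt_castSucc_iff.1 hj)
    simp only [hiff]
  · have hiff : (∀ j, j < Fin.last n →
          (Fin.snoc v x : Fin (n + 1) → ℝ) (Fin.last n) < (Fin.snoc v x : Fin (n + 1) → ℝ) j)
        ↔ ∀ i, x < v i := by
      simp only [Fin.snoc_last]
      constructor
      · intro h i
        have := h (Fin.castSucc i) (Fin.castSucc_lt_last i)
        simpa using this
      · intro h j hj
        obtain ⟨j', rfl⟩ := Fin.exists_castSucc_eq.2 hj.ne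
        simpa using h j'
    simp only [hiff]

lemma snoc_mem_box {n : ℕ} (v : Fin n → ℝ) (x : ℝ) :
    (Fin.snoc v x : Fin (n + 1) → ℝ) ∈ Set.univ.pi (fun _ : Fin (n + 1) => Set.Icc (0 : ℝ) 1)
      ↔ x ∈ Set.Icc (0 : ℝ) 1 ∧ v ∈ Set.univ.pi (fun _ : Fin n => Set.Icc (0 : ℝ) 1) := by
  simp only [Set.mem_pi, Set.mem_univ, true_implies]
  constructor
  · intro h
    exact ⟨by simpa using h (Fin.last n), fun i => by simpa using h (Fin.castSucc i)⟩
  · rintro ⟨hx, hv⟩ j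
    refine Fin.lastCases ?_ ?_ j
    · simpa using hx
    · intro i; simpa using hv i

lemma lintegral_rpow_Ico (θ : ℝ) (hθ : 0 < θ) (m : ℝ) (hm0 : 0 ≤ m) :
    ∫⁻ x in Set.Ico (0 : ℝ) m, ENNReal.ofReal (x ^ (θ - 1))
      = ENNReal.ofReal (m ^ θ / θ) := by
  rw [Measure.restrict_congr_set Ico_ae_eq_Ioc]
  have hint : IntegrableOn (fun x : ℝ => x ^ (θ - 1)) (Set.Ioc 0 m) := by
    rw [← intervalIntegrable_iff_integrableOn_Ioc_of_le hm0]
    exact intervalIntegral.intervalIntegrable_rpow' (by linarith)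
  have hnn : 0 ≤ᵐ[volume.restrict (Set.Ioc 0 m)] fun x : ℝ => x ^ (θ - 1) := by
    filter_upwards [ae_restrict_mem measurableSet_Ioc] with x hx
    exact Real.rpow_nonneg hx.1.le _
  rw [← ofReal_integral_eq_lintegral_ofReal hint hnn]
  congr 1
  rw [← intervalIntegral.integral_of_le hm0, integral_rpow (Or.inl (by linarith))]
  rw [sub_add_cancel, Real.zero_rpow hθ.ne', sub_zero]

lemma one_dim (θ : ℝ) (hθ : 0 < θ) (m : ℝ) (hm0 : 0 ≤ m) (hm1 : m ≤ 1) (K : ℕ) :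
    ∫⁻ x in Set.Icc (0 : ℝ) 1,
        ENNReal.ofReal (θ ^ (K + if x < m then 1 else 0) * (min m x) ^ (θ - 1))
      = ENNReal.ofReal (θ ^ K * m ^ (θ - 1)) := by
  have hsplit : Set.Icc (0 : ℝ) 1 = Set.Ico 0 m ∪ Set.Icc m 1 := by
    ext y
    simp only [Set.mem_Icc, Set.mem_union, Set.mem_Ico]
    constructor
    · rintro ⟨h0, h1⟩
      rcases lt_or_ge y m with h | h
      · exact Or.inl ⟨h0, h⟩
      · exact Or.inr ⟨h, h1⟩
    · rintro (⟨h0, h⟩ | ⟨h, h1⟩)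
      · exact ⟨h0, h.le.trans hm1⟩
      · exact ⟨hm0.trans h, h1⟩
  have hdisj : Disjoint (Set.Ico (0 : ℝ) m) (Set.Icc m 1) := by
    rw [Set.disjoint_left]
    rintro y ⟨_, h1⟩ ⟨h2, _⟩
    exact absurd h1 (not_lt.2 h2)
  rw [hsplit, lintegral_union measurableSet_Icc hdisj]
  have hA : ∫⁻ x in Set.Ico (0 : ℝ) m,
      ENNReal.ofReal (θ ^ (K + if x < m then 1 else 0) * (min m x) ^ (θ - 1))
      = ENNReal.ofReal (θ ^ K * m ^ θ) := by
    have h1 : ∫⁻ x in Set.Ico (0 : ℝ) m,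
        ENNReal.ofReal (θ ^ (K + if x < m then 1 else 0) * (min m x) ^ (θ - 1))
        = ∫⁻ x in Set.Ico (0 : ℝ) m,
          ENNReal.ofReal (θ ^ (K + 1)) * ENNReal.ofReal (x ^ (θ - 1)) :=
      setLIntegral_congr_fun measurableSet_Ico (fun x hx => by
        rw [if_pos hx.2, min_eq_right hx.2.le, ENNReal.ofReal_mul (by positivity)])
    rw [h1, lintegral_const_mul _ ((measurable_rpow_const (θ - 1)).ennreal_ofReal)]
    rw [lintegral_rpow_Ico θ hθ m hm0]
    rw [← ENNReal.ofReal_mul (by positivity)]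
    congr 1
    rw [pow_succ]
    field_simp
  have hB : ∫⁻ x in Set.Icc m 1,
      ENNReal.ofReal (θ ^ (K + if x < m then 1 else 0) * (min m x) ^ (θ - 1))
      = ENNReal.ofReal (θ ^ K * m ^ (θ - 1)) * ENNReal.ofReal (1 - m) := by
    rw [setLIntegral_congr_fun measurableSet_Icc
      (fun x hx => by
        rw [if_neg (not_lt.2 hx.1), min_eq_left hx.1, add_zero])]
    rw [lintegral_const, Measure.restrict_apply_univ, Real.volume_Icc]
  have hmr : (0:ℝ) ≤ m ^ (θ - 1) := Real.rpow_nonneg hm0 _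
  have hmt : (0:ℝ) ≤ m ^ θ := Real.rpow_nonneg hm0 _
  have hK : (0:ℝ) ≤ θ ^ K := pow_nonneg hθ.le _
  rw [hB, hA, ← ENNReal.ofReal_mul (mul_nonneg hK hmr),
    ← ENNReal.ofReal_add (mul_nonneg hK hmt)
      (mul_nonneg (mul_nonneg hK hmr) (by linarith))]
  congr 1
  rcases eq_or_lt_of_le hm0 with rfl | hm
  · rw [Real.zero_rpow hθ.ne']
    ring
  · rw [Real.rpow_sub_one hm.ne']
    field_simp
    ring

lemma lintegral_box (θ : ℝ) (hθ : 0 < θ) :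
    ∀ n : ℕ, 1 ≤ n →
      ∫⁻ u in Set.univ.pi (fun _ : Fin n => Set.Icc (0 : ℝ) 1),
        ENNReal.ofReal (θ ^ numRecords u * (⨅ i, u i) ^ (θ - 1)) = 1 := by
  refine Nat.le_induction ?_ ?_
  · -- base case n = 1
    have hrec : ∀ u : Fin 1 → ℝ, numRecords u = 1 := by
      intro u
      have h : ∀ i j : Fin 1, ¬ j < i := by decide
      rw [numRecords_eq_sum]
      simp [h]
    have hinf : ∀ u : Fin 1 → ℝ, (⨅ i, u i) = u 0 := fun u => ciInf_unique
    have mp := (volume_preserving_funUnique (Fin 1) ℝ).symm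
    have key := mp.setLIntegral_comp_preimage_emb (MeasurableEquiv.measurableEmbedding _)
      (fun u : Fin 1 → ℝ => ENNReal.ofReal (θ ^ numRecords u * (⨅ i, u i) ^ (θ - 1)))
      (Set.univ.pi fun _ : Fin 1 => Set.Icc (0 : ℝ) 1)
    refine key.symm.trans ?_
    have hpre : (MeasurableEquiv.funUnique (Fin 1) ℝ).symm ⁻¹'
        (Set.univ.pi fun _ : Fin 1 => Set.Icc (0 : ℝ) 1) = Set.Icc (0 : ℝ) 1 := by
      ext x
      simp [MeasurableEquiv.funUnique, Set.mem_pi, Pi.le_def, uniqueElim_const, Unique.forall_iff]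
    have happ : ∀ x : ℝ,
        (fun u : Fin 1 → ℝ => ENNReal.ofReal (θ ^ numRecords u * (⨅ i, u i) ^ (θ - 1)))
          ((MeasurableEquiv.funUnique (Fin 1) ℝ).symm x)
        = ENNReal.ofReal θ * ENNReal.ofReal (x ^ (θ - 1)) := by
      intro x
      simp only [hrec, hinf, pow_one]
      rw [ENNReal.ofReal_mul hθ.le]
      rfl
    rw [hpre]
    calc ∫⁻ x in Set.Icc (0:ℝ) 1,
          (fun u : Fin 1 → ℝ => ENNReal.ofReal (θ ^ numRecords u * (⨅ i, u i) ^ (θ - 1)))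
            ((MeasurableEquiv.funUnique (Fin 1) ℝ).symm x)
        = ∫⁻ x in Set.Icc (0:ℝ) 1, ENNReal.ofReal θ * ENNReal.ofReal (x ^ (θ - 1)) := by
          exact lintegral_congr fun x => happ x
      _ = ENNReal.ofReal θ * ∫⁻ x in Set.Icc (0:ℝ) 1, ENNReal.ofReal (x ^ (θ - 1)) :=
          lintegral_const_mul _ ((measurable_rpow_const (θ - 1)).ennreal_ofReal)
      _ = 1 := by
          rw [← Measure.restrict_congr_set Ioc_ae_eq_Icc,
            ← Measure.restrict_congr_set Ico_ae_eq_Ioc,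
            lintegral_rpow_Ico θ hθ 1 zero_le_one, Real.one_rpow,
            ← ENNReal.ofReal_mul hθ.le]
          rw [mul_one_div, div_self hθ.ne', ENNReal.ofReal_one]
  · -- inductive step
    intro n hn IH
    classical
    have hne : Nonempty (Fin n) := ⟨⟨0, hn⟩⟩
    set B1 : Set (Fin (n+1) → ℝ) := Set.univ.pi fun _ => Set.Icc (0:ℝ) 1 with hB1
    set Bn : Set (Fin n → ℝ) := Set.univ.pi fun _ => Set.Icc (0:ℝ) 1 with hBn
    have hmeasB1 : MeasurableSet B1 := MeasurableSet.univ_pi fun _ => measurableSet_Icc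
    set F : (Fin (n+1) → ℝ) → ℝ≥0∞ :=
      fun u => ENNReal.ofReal (θ ^ numRecords u * (⨅ i, u i) ^ (θ - 1)) with hF
    have hFmeas : Measurable F := (measurable_integrand θ).ennreal_ofReal
    rw [← lintegral_indicator hmeasB1]
    have mp := (volume_preserving_piFinSuccAbove (fun _ : Fin (n+1) => ℝ) (Fin.last n)).symm
    have key := mp.lintegral_comp_emb (MeasurableEquiv.measurableEmbedding _) (B1.indicator F)
    have hfa : AEMeasurable (fun a : ℝ × (Fin n → ℝ) => B1.indicator F
        ((MeasurableEquiv.piFinSuccAbove (fun _ : Fin (n+1) => ℝ) (Fin.last n)).symm a))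
        (volume.prod volume) :=
      ((hFmeas.indicator hmeasB1).comp (MeasurableEquiv.measurable _)).aemeasurable
    rw [← key, Measure.volume_eq_prod, lintegral_prod_symm _ hfa]
    have hsymm : ∀ (x : ℝ) (v : Fin n → ℝ),
        (MeasurableEquiv.piFinSuccAbove (fun _ : Fin (n+1) => ℝ) (Fin.last n)).symm (x, v)
          = (Fin.snoc v x : Fin (n+1) → ℝ) := by
      intro x v
      simp [MeasurableEquiv.piFinSuccAbove, Fin.insertNth_last', Fin.snocEquiv]
    have hinner : ∀ v : Fin n → ℝ,
        (∫⁻ x, B1.indicator F ((MeasurableEquiv.piFinSuccAbove (fun _ : Fin (n+1) => ℝ) (Fin.last n)).symm (x, v))) =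
          Bn.indicator (fun v => ENNReal.ofReal (θ ^ numRecords v * (⨅ i, v i) ^ (θ - 1))) v := by
      intro v
      by_cases hv : v ∈ Bn
      · have hm0 : 0 ≤ ⨅ i, v i := le_ciInf fun i => (hv i (Set.mem_univ i)).1
        have hm1 : (⨅ i, v i) ≤ 1 :=
          (ciInf_le (Set.finite_range v).bddBelow ⟨0, hn⟩).trans (hv ⟨0, hn⟩ (Set.mem_univ _)).2
        have hx : ∀ x : ℝ, B1.indicator F ((MeasurableEquiv.piFinSuccAbove (fun _ : Fin (n+1) => ℝ) (Fin.last n)).symm (x, v)) =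
            (Set.Icc (0:ℝ) 1).indicator (fun x => ENNReal.ofReal
              (θ ^ (numRecords v + if x < ⨅ i, v i then 1 else 0)
                * (min (⨅ i, v i) x) ^ (θ - 1))) x := by
          intro x
          rw [hsymm, Set.indicator_apply, Set.indicator_apply]
          by_cases hxi : x ∈ Set.Icc (0:ℝ) 1
          · rw [if_pos ((snoc_mem_box v x).2 ⟨hxi, hv⟩), if_pos hxi, hF]
            simp only
            rw [numRecords_snoc, iInf_snoc hn]
            simp only [lt_iInf_iff' hn]
          · rw [if_neg (fun hmem => hxi ((snoc_mem_box v x).1 hmem).1), if_neg hxi]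
        calc (∫⁻ x, B1.indicator F ((MeasurableEquiv.piFinSuccAbove (fun _ : Fin (n+1) => ℝ) (Fin.last n)).symm (x, v)))
            = ∫⁻ x in Set.Icc (0:ℝ) 1, ENNReal.ofReal
              (θ ^ (numRecords v + if x < ⨅ i, v i then 1 else 0)
                * (min (⨅ i, v i) x) ^ (θ - 1)) := by
              rw [lintegral_congr hx, lintegral_indicator measurableSet_Icc]
          _ = ENNReal.ofReal (θ ^ numRecords v * (⨅ i, v i) ^ (θ - 1)) :=
              one_dim θ hθ _ hm0 hm1 _
          _ = Bn.indicator
              (fun v => ENNReal.ofReal (θ ^ numRecords v * (⨅ i, v i) ^ (θ - 1))) v := by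
              rw [Set.indicator_of_mem hv]
      · have hx : ∀ x : ℝ, B1.indicator F ((MeasurableEquiv.piFinSuccAbove (fun _ : Fin (n+1) => ℝ) (Fin.last n)).symm (x, v)) = 0 := by
          intro x
          rw [hsymm, Set.indicator_apply, if_neg (fun hmem => hv ((snoc_mem_box v x).1 hmem).2)]
        rw [lintegral_congr hx, lintegral_zero, Set.indicator_of_notMem hv]
    calc ∫⁻ v, ∫⁻ x, B1.indicator F ((MeasurableEquiv.piFinSuccAbove (fun _ : Fin (n+1) => ℝ) (Fin.last n)).symm (x, v))
        = ∫⁻ v, Bn.indicator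
            (fun v => ENNReal.ofReal (θ ^ numRecords v * (⨅ i, v i) ^ (θ - 1))) v :=
          lintegral_congr hinner
      _ = 1 := by
          rw [lintegral_indicator (MeasurableSet.univ_pi fun _ => measurableSet_Icc)]
          exact IH

/-- For `θ > 0` and `n ≥ 1`, the function
`u ↦ θ^{K_n(u)} (min_i u_i)^{θ-1}`, where `K_n(u)` is the number of lower records,
integrates to `1` over the cube `[0,1]^n`; i.e. it is a probability density. -/
theorem ewens_density_integral (n : ℕ) (hn : 0 < n) (θ : ℝ) (hθ : 0 < θ) :
    ∫ u in Set.univ.pi (fun _ : Fin n => Set.Icc (0 : ℝ) 1),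
      θ ^ numRecords u * (⨅ i, u i) ^ (θ - 1) = 1 := by
  have hne : Nonempty (Fin n) := ⟨⟨0, hn⟩⟩
  have hmeas : MeasurableSet (Set.univ.pi (fun _ : Fin n => Set.Icc (0 : ℝ) 1)) :=
    MeasurableSet.univ_pi fun _ => measurableSet_Icc
  have hnn : 0 ≤ᵐ[volume.restrict (Set.univ.pi (fun _ : Fin n => Set.Icc (0 : ℝ) 1))]
      fun u : Fin n → ℝ => θ ^ numRecords u * (⨅ i, u i) ^ (θ - 1) := by
    filter_upwards [ae_restrict_mem hmeas] with u hu
    have h0 : 0 ≤ ⨅ i, u i := le_ciInf fun i => (hu i (Set.mem_univ i)).1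
    exact mul_nonneg (pow_nonneg hθ.le _) (Real.rpow_nonneg h0 _)
  rw [integral_eq_lintegral_of_nonneg_ae hnn ((measurable_integrand θ).aestronglyMeasurable)]
  rw [lintegral_box θ hθ n hn, ENNReal.toReal_one]
end

section
/- Let θ > 0 and let (U_1,...,U_n) have density θ^{K_n(u)} min(u_1,...,u_n)^{θ−1} on [0,1]^n. Then the relative order of (U_1,...,U_n) is independent of its order statistics, and conditionally on the lower record indicators, all relative orders compatible with those indicators are equally likely. -/
open MeasureTheory ProbabilityTheory
open scoped ENNReal Classical

/-- The law on `[0,1]^n` with density `θ^{K_n(u)} (min_i u_i)^{θ-1}` with respect to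
Lebesgue measure, where `K_n(u)` is the number of lower records. -/
noncomputable def ewensLaw (n : ℕ) (θ : ℝ) : Measure (Fin n → ℝ) :=
  (volume.restrict (Set.univ.pi fun _ : Fin n => Set.Icc (0 : ℝ) 1)).withDensity
    fun u => ENNReal.ofReal (θ ^ numRecords u * (⨅ i, u i) ^ (θ - 1))

/-- If the relative order of the sample is `σ` (i.e. `U_{σ(1)} < ⋯ < U_{σ(n)}`), then
position `i` is a lower record of the sequence iff `σ⁻¹ i < σ⁻¹ j` for all `j < i`. -/
def recordPatternOf {n : ℕ} (σ : Equiv.Perm (Fin n)) (i : Fin n) : Prop :=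
  ∀ j, j < i → σ.symm i < σ.symm j

namespace EwensAux

variable {n : ℕ}

/-- The unit box `[0,1]^n`. -/
def box (n : ℕ) : Set (Fin n → ℝ) := Set.univ.pi fun _ : Fin n => Set.Icc (0 : ℝ) 1

/-- The event that the sample is strictly increasing along `σ`. -/
def ASet (σ : Equiv.Perm (Fin n)) : Set (Fin n → ℝ) :=
  {u | ∀ i j : Fin n, i < j → u (σ i) < u (σ j)}

lemma measurableSet_ASet (σ : Equiv.Perm (Fin n)) : MeasurableSet (ASet σ) := by
  have : ASet σ = ⋂ (i : Fin n) (j : Fin n) (_ : i < j), {u : Fin n → ℝ | u (σ i) < u (σ j)} := by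
    ext u; simp [ASet]
  rw [this]
  exact .iInter fun i => .iInter fun j => .iInter fun _ =>
    measurableSet_lt (measurable_pi_apply _) (measurable_pi_apply _)

lemma measurableSet_box : MeasurableSet (box n) :=
  MeasurableSet.univ_pi fun _ => measurableSet_Icc

lemma perm_eq_one_of_strictMono {π : Equiv.Perm (Fin n)} (h : StrictMono (π : Fin n → Fin n)) :
    π = 1 := by
  have h2 := Subsingleton.elim
    (StrictMono.orderIsoOfSurjective (π : Fin n → Fin n) h π.surjective)
    (OrderIso.refl (Fin n))
  ext i
  have h3 := congrArg (fun f : Fin n ≃o Fin n => f i) h2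
  simp only [StrictMono.coe_orderIsoOfSurjective, OrderIso.refl_apply] at h3
  simp [h3]

lemma ASet_disjoint {τ τ' : Equiv.Perm (Fin n)} (h : τ ≠ τ') : Disjoint (ASet τ) (ASet τ') := by
  rw [Set.disjoint_left]
  intro u hu hu'
  apply h
  have key : ∀ (ρ : Equiv.Perm (Fin n)), u ∈ ASet ρ → ∀ a b, u (ρ a) < u (ρ b) → a < b := by
    intro ρ hρ a b hab
    rcases lt_trichotomy a b with h' | h' | h'
    · exact h'
    · exact absurd hab (by simp [h'])
    · exact absurd (hρ b a h') (not_lt.2 hab.le)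
  have hsm : StrictMono ((τ'.trans τ.symm : Equiv.Perm (Fin n)) : Fin n → Fin n) := by
    intro a b hab
    apply key τ hu
    simp only [Equiv.Perm.coe_mul, Function.comp_apply, Equiv.trans_apply,
      Equiv.apply_symm_apply]
    exact hu' a b hab
  have h1 : τ'.trans τ.symm = 1 := perm_eq_one_of_strictMono hsm
  ext a
  have h2 := congrArg (fun π : Equiv.Perm (Fin n) => τ (π a)) h1
  simp only [Equiv.trans_apply, Equiv.apply_symm_apply, Equiv.Perm.coe_one, id_eq] at h2
  simp [h2]

lemma mem_ASet_iff_lt {σ : Equiv.Perm (Fin n)} {u : Fin n → ℝ} (hu : u ∈ ASet σ)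
    (x y : Fin n) : u x < u y ↔ σ.symm x < σ.symm y := by
  constructor
  · intro hxy
    rcases lt_trichotomy (σ.symm x) (σ.symm y) with h' | h' | h'
    · exact h'
    · exact absurd hxy (by simp [show x = y from by simpa using congrArg σ h'])
    · have := hu _ _ h'
      simp only [Equiv.apply_symm_apply] at this
      exact absurd this (not_lt.2 hxy.le)
  · intro h'
    have := hu _ _ h'
    simpa using this

lemma numRecords_eq {σ : Equiv.Perm (Fin n)} {u : Fin n → ℝ} (hu : u ∈ ASet σ) :
    numRecords u = Nat.card {i : Fin n // recordPatternOf σ i} := by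
  unfold numRecords
  exact Nat.card_congr (Equiv.subtypeEquivRight fun i => by
    constructor
    · intro h j hj
      exact (mem_ASet_iff_lt hu i j).1 (h j hj)
    · intro h j hj
      exact (mem_ASet_iff_lt hu i j).2 (h j hj))

lemma iInf_comp_perm (σ : Equiv.Perm (Fin n)) (v : Fin n → ℝ) :
    (⨅ i, v (σ i)) = ⨅ i, v i := by
  rw [iInf, iInf]
  congr 1
  exact Set.range_comp v σ ▸ by rw [σ.range_eq_univ, Set.image_univ]

lemma measurable_comp_perm (σ : Equiv.Perm (Fin n)) :
    Measurable (fun u : Fin n → ℝ => u ∘ σ) :=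
  measurable_pi_lambda _ fun _ => measurable_pi_apply _

lemma measurable_g (θ : ℝ) :
    Measurable fun v : Fin n → ℝ => ENNReal.ofReal ((⨅ i, v i) ^ (θ - 1)) :=
  ENNReal.measurable_ofReal.comp
    ((Measurable.iInf fun i => measurable_pi_apply i).pow measurable_const)

lemma piCongrLeft_eq (σ : Equiv.Perm (Fin n)) (v : Fin n → ℝ) :
    (MeasurableEquiv.piCongrLeft (fun _ : Fin n => ℝ) (σ : Fin n ≃ Fin n)) v = v ∘ ⇑σ.symm := by
  funext i
  have h := MeasurableEquiv.piCongrLeft_apply_apply (σ : Fin n ≃ Fin n)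
    (β := fun _ : Fin n => ℝ) v (σ.symm i)
  simpa using h

/-- Key computation: the `ewensLaw` measure of the set where the ordering is `σ` and the
sorted vector lies in `E`. -/
lemma ewens_apply (n : ℕ) (θ : ℝ) (hθ : 0 < θ) (σ : Equiv.Perm (Fin n))
    {E : Set (Fin n → ℝ)} (hE : MeasurableSet E) :
    ewensLaw n θ (ASet σ ∩ (fun u : Fin n → ℝ => u ∘ σ) ⁻¹' E)
      = ENNReal.ofReal (θ ^ Nat.card {i : Fin n // recordPatternOf σ i}) *
        ∫⁻ v in (ASet (1 : Equiv.Perm (Fin n)) ∩ E) ∩ box n,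
          ENNReal.ofReal ((⨅ i, v i) ^ (θ - 1)) := by
  have hmS : MeasurableSet (ASet σ ∩ (fun u : Fin n → ℝ => u ∘ σ) ⁻¹' E) :=
    (measurableSet_ASet σ).inter (measurable_comp_perm σ hE)
  rw [ewensLaw, withDensity_apply _ hmS, Measure.restrict_restrict hmS,
    show (Set.univ.pi fun _ : Fin n => Set.Icc (0:ℝ) 1) = box n from rfl]
  have hcong : ∀ u ∈ (ASet σ ∩ (fun u : Fin n → ℝ => u ∘ σ) ⁻¹' E) ∩ box n,
      ENNReal.ofReal (θ ^ numRecords u * (⨅ i, u i) ^ (θ - 1))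
        = ENNReal.ofReal (θ ^ Nat.card {i : Fin n // recordPatternOf σ i}) *
          ENNReal.ofReal ((⨅ i, u i) ^ (θ - 1)) := by
    intro u hu
    rw [numRecords_eq hu.1.1, ENNReal.ofReal_mul (by positivity)]
  rw [setLIntegral_congr_fun (hmS.inter measurableSet_box)
    hcong, lintegral_const_mul _ (measurable_g θ)]
  congr 1
  have mp := volume_measurePreserving_piCongrLeft (fun _ : Fin n => ℝ) (σ : Fin n ≃ Fin n)
  have key := mp.setLIntegral_comp_preimage_emb
      (MeasurableEquiv.measurableEmbedding
        (MeasurableEquiv.piCongrLeft (fun _ : Fin n => ℝ) (σ : Fin n ≃ Fin n)))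
      (fun v => ENNReal.ofReal ((⨅ i, v i) ^ (θ - 1)))
      ((ASet σ ∩ (fun u : Fin n → ℝ => u ∘ σ) ⁻¹' E) ∩ box n)
  rw [← key]
  have hpre : (MeasurableEquiv.piCongrLeft (fun _ : Fin n => ℝ) (σ : Fin n ≃ Fin n)) ⁻¹'
        ((ASet σ ∩ (fun u : Fin n → ℝ => u ∘ σ) ⁻¹' E) ∩ box n)
      = (ASet (1 : Equiv.Perm (Fin n)) ∩ E) ∩ box n := by
    ext v
    have hv : (MeasurableEquiv.piCongrLeft (fun _ : Fin n => ℝ) (σ : Fin n ≃ Fin n)) v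
        = v ∘ ⇑σ.symm := piCongrLeft_eq σ v
    simp only [Set.mem_preimage, hv, Set.mem_inter_iff]
    refine and_congr (and_congr ?_ ?_) ?_
    · constructor
      · intro h i j hij; simpa using h i j hij
      · intro h i j hij
        simp only [ASet, Set.mem_setOf_eq, Function.comp_apply, Equiv.symm_apply_apply]
        exact h i j hij
    · rw [show (v ∘ ⇑σ.symm) ∘ ⇑σ = v from funext fun i => by simp]
    · simp only [box, Set.mem_pi, Set.mem_univ, forall_true_left, Function.comp_apply]
      exact ⟨fun h i => by simpa using h (σ i), fun h i => h _⟩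
  rw [hpre]
  refine lintegral_congr fun v => ?_
  rw [piCongrLeft_eq]
  simp only [Function.comp_apply]
  rw [iInf_comp_perm σ.symm v]

lemma volume_tie_zero {i j : Fin n} (hij : i ≠ j) :
    volume {u : Fin n → ℝ | u i = u j} = 0 := by
  set L : (Fin n → ℝ) →ₗ[ℝ] ℝ :=
    (LinearMap.proj i : (Fin n → ℝ) →ₗ[ℝ] ℝ) - (LinearMap.proj j : (Fin n → ℝ) →ₗ[ℝ] ℝ) with hL
  have hset : {u : Fin n → ℝ | u i = u j} = (LinearMap.ker L : Set (Fin n → ℝ)) := by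
    ext u
    simp [hL, LinearMap.mem_ker, sub_eq_zero, LinearMap.sub_apply, LinearMap.proj_apply]
  rw [hset]
  have : (LinearMap.ker L : Submodule ℝ (Fin n → ℝ)) ≠ ⊤ := by
    intro htop
    have h1 : L (Pi.single j 1) = 0 := by
      rw [← LinearMap.mem_ker, htop]; trivial
    simp [hL, LinearMap.sub_apply, LinearMap.proj_apply, Pi.single_eq_of_ne hij,
      Pi.single_eq_same] at h1
  exact Measure.addHaar_submodule volume _ this

lemma volume_compl_iUnion_ASet :
    volume ((⋃ τ : Equiv.Perm (Fin n), ASet τ)ᶜ) = 0 := by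
  have hsub : (⋃ τ : Equiv.Perm (Fin n), ASet τ)ᶜ ⊆
      ⋃ (p : Fin n × Fin n) (_ : p.1 ≠ p.2), {u : Fin n → ℝ | u p.1 = u p.2} := by
    intro u hu
    simp only [Set.mem_compl_iff, Set.mem_iUnion, not_exists] at hu
    by_cases hinj : Function.Injective u
    · exfalso
      apply hu (Tuple.sort u)
      intro a b hab
      exact ((Tuple.monotone_sort u).strictMono_of_injective
        (hinj.comp (Tuple.sort u).injective)) hab
    · simp only [Function.Injective, not_forall] at hinj
      obtain ⟨a, b, hab, hne⟩ := hinj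
      refine Set.mem_iUnion.2 ⟨(a, b), Set.mem_iUnion.2 ⟨hne, hab⟩⟩
  refine measure_mono_null hsub ?_
  exact measure_iUnion_null fun p => measure_iUnion_null fun hp => volume_tie_zero hp

end EwensAux

open EwensAux in
/-- If `(U_1, …, U_n)` has density `θ^{K_n(u)} (min u)^{θ-1}` on `[0,1]^n`, then
(1) the relative order of `(U_1, …, U_n)` is independent of its order statistics, and
(2) conditionally on the lower record indicators, all relative orders compatible with
those indicators are equally likely: two ranking permutations with the same record
pattern have the same probability. -/
theorem relOrder_indep_orderStats_ewensLaw (n : ℕ) (θ : ℝ) (hθ : 0 < θ)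
    {Ω : Type*} [MeasurableSpace Ω] (μ : Measure Ω) [IsProbabilityMeasure μ]
    (U : Fin n → Ω → ℝ) (hmeas : ∀ i, Measurable (U i))
    (hjoint : Measure.map (fun ω i => U i ω) μ = ewensLaw n θ) :
    (∀ (σ : Equiv.Perm (Fin n)) (E : Set (Fin n → ℝ)), MeasurableSet E →
      μ {ω | (∀ i j : Fin n, i < j → U (σ i) ω < U (σ j) ω) ∧
              (fun i => U (σ i) ω) ∈ E}
        = μ {ω | ∀ i j : Fin n, i < j → U (σ i) ω < U (σ j) ω} *
          μ {ω | ∃ τ : Equiv.Perm (Fin n),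
              (∀ i j : Fin n, i < j → U (τ i) ω < U (τ j) ω) ∧
              (fun i => U (τ i) ω) ∈ E}) ∧
    (∀ σ σ' : Equiv.Perm (Fin n),
      (∀ i, recordPatternOf σ i ↔ recordPatternOf σ' i) →
      μ {ω | ∀ i j : Fin n, i < j → U (σ i) ω < U (σ j) ω}
        = μ {ω | ∀ i j : Fin n, i < j → U (σ' i) ω < U (σ' j) ω}) := by
  classical
  have hf : Measurable (fun ω i => U i ω) := measurable_pi_lambda _ hmeas
  set f : Ω → (Fin n → ℝ) := fun ω i => U i ω with hf_def
  set P : Measure (Fin n → ℝ) := ewensLaw n θ with hP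
  have hmap : ∀ S : Set (Fin n → ℝ), MeasurableSet S → μ (f ⁻¹' S) = P S := by
    intro S hS
    rw [← hjoint, Measure.map_apply hf hS]
  set c : Equiv.Perm (Fin n) → ℝ≥0∞ :=
    fun τ => ENNReal.ofReal (θ ^ Nat.card {i : Fin n // recordPatternOf τ i}) with hc
  set I : Set (Fin n → ℝ) → ℝ≥0∞ := fun E =>
    ∫⁻ v in (ASet (1 : Equiv.Perm (Fin n)) ∩ E) ∩ box n,
      ENNReal.ofReal ((⨅ i, v i) ^ (θ - 1)) with hI
  have hkey : ∀ (σ : Equiv.Perm (Fin n)) (E : Set (Fin n → ℝ)), MeasurableSet E →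
      P (ASet σ ∩ (fun u : Fin n → ℝ => u ∘ σ) ⁻¹' E) = c σ * I E := by
    intro σ E hE
    simp only [hc, hI, hP]
    exact ewens_apply n θ hθ σ hE
  have hAσ : ∀ σ : Equiv.Perm (Fin n), P (ASet σ) = c σ * I Set.univ := by
    intro σ
    have h := hkey σ Set.univ MeasurableSet.univ
    simpa using h
  have hUnion : ∀ (E : Set (Fin n → ℝ)), MeasurableSet E →
      P (⋃ τ : Equiv.Perm (Fin n), ASet τ ∩ (fun u : Fin n → ℝ => u ∘ τ) ⁻¹' E)
        = (∑' τ : Equiv.Perm (Fin n), c τ) * I E := by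
    intro E hE
    rw [measure_iUnion
      (fun τ τ' hττ' => ((ASet_disjoint hττ').mono Set.inter_subset_left
        Set.inter_subset_left))
      (fun τ => (measurableSet_ASet τ).inter (measurable_comp_perm τ hE))]
    rw [← ENNReal.tsum_mul_right]
    exact tsum_congr fun τ => hkey τ E hE
  have hPnull : P ((⋃ τ : Equiv.Perm (Fin n), ASet τ)ᶜ) = 0 := by
    have habs : P ≪ volume := by
      rw [hP, ewensLaw]
      exact (withDensity_absolutelyContinuous _ _).trans
        (Measure.absolutelyContinuous_of_le Measure.restrict_le_self)
    exact habs volume_compl_iUnion_ASet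
  have hPuniv : P Set.univ = 1 := by
    rw [← hjoint, Measure.map_apply hf MeasurableSet.univ, Set.preimage_univ, measure_univ]
  have hone : (∑' τ : Equiv.Perm (Fin n), c τ) * I Set.univ = 1 := by
    have h2 := hUnion Set.univ MeasurableSet.univ
    simp only [Set.preimage_univ, Set.inter_univ] at h2
    rw [← h2]
    have hm : MeasurableSet (⋃ τ : Equiv.Perm (Fin n), ASet τ) :=
      MeasurableSet.iUnion fun τ => measurableSet_ASet τ
    have h3 := measure_add_measure_compl (μ := P) hm
    rw [hPnull, add_zero, hPuniv] at h3
    exact h3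
  have hev3 : ∀ E : Set (Fin n → ℝ),
      {ω | ∃ τ : Equiv.Perm (Fin n),
          (∀ i j : Fin n, i < j → U (τ i) ω < U (τ j) ω) ∧ (fun i => U (τ i) ω) ∈ E}
        = f ⁻¹' (⋃ τ : Equiv.Perm (Fin n), ASet τ ∩ (fun u : Fin n → ℝ => u ∘ τ) ⁻¹' E) := by
    intro E
    ext ω
    simp only [Set.mem_setOf_eq, Set.mem_preimage, Set.mem_iUnion, Set.mem_inter_iff]
    exact Iff.rfl
  have hcardeq : ∀ σ σ' : Equiv.Perm (Fin n),
      (∀ i, recordPatternOf σ i ↔ recordPatternOf σ' i) → c σ = c σ' := by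
    intro σ σ' hpat
    simp only [hc]
    rw [Nat.card_congr (Equiv.subtypeEquivRight hpat)]
  constructor
  · intro σ E hE
    have e1 : {ω | (∀ i j : Fin n, i < j → U (σ i) ω < U (σ j) ω) ∧
        (fun i => U (σ i) ω) ∈ E}
        = f ⁻¹' (ASet σ ∩ (fun u : Fin n → ℝ => u ∘ σ) ⁻¹' E) := rfl
    have e2 : {ω | ∀ i j : Fin n, i < j → U (σ i) ω < U (σ j) ω} = f ⁻¹' (ASet σ) := rfl
    rw [e1, e2, hev3 E,
      hmap _ ((measurableSet_ASet σ).inter (measurable_comp_perm σ hE)),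
      hmap _ (measurableSet_ASet σ),
      hmap _ (MeasurableSet.iUnion fun τ =>
        (measurableSet_ASet τ).inter (measurable_comp_perm τ hE)),
      hkey σ E hE, hAσ σ, hUnion E hE]
    rw [show (c σ * I Set.univ) * ((∑' τ : Equiv.Perm (Fin n), c τ) * I E)
        = (c σ * I E) * ((∑' τ : Equiv.Perm (Fin n), c τ) * I Set.univ) by ring,
      hone, mul_one]
  · intro σ σ' hpat
    have e2 : {ω | ∀ i j : Fin n, i < j → U (σ i) ω < U (σ j) ω} = f ⁻¹' (ASet σ) := rfl
    have e2' : {ω | ∀ i j : Fin n, i < j → U (σ' i) ω < U (σ' j) ω} = f ⁻¹' (ASet σ') := rfl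
    rw [e2, e2', hmap _ (measurableSet_ASet σ), hmap _ (measurableSet_ASet σ'),
      hAσ σ, hAσ σ', hcardeq σ σ' hpat]
end

section
/- Let θ > 0 and let (U_1,...,U_n) have density θ^{K_n(u)} min(u_1,...,u_n)^{θ−1} on [0,1]^n. Under this law, the distribution of the relative order of (U_1,...,U_n), viewed as a random permutation of [n], assigns to each permutation π a probability proportional to θ^{K(π')}, where K(π') is the number of lower records of π as a sequence (equivalently the number of cycles under the fundamental bijection). -/
open MeasureTheory ProbabilityTheory
open scoped ENNReal

/-- The number of lower records of a permutation `π` of `[n]` read as the sequence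
`(π 0, …, π (n-1))`; under the Foata fundamental bijection this is the number of cycles
of the corresponding permutation. -/
noncomputable def numWordRecords {n : ℕ} (π : Equiv.Perm (Fin n)) : ℕ :=
  Nat.card {i : Fin n // ∀ j, j < i → π i < π j}

/-- Insert the largest value `Fin.last n` at position `k` into the word of `σ`. -/
def insPerm {n : ℕ} (k : Fin (n + 1)) (σ : Equiv.Perm (Fin n)) : Equiv.Perm (Fin (n + 1)) :=
  (finSuccEquiv' k).trans (σ.optionCongr.trans (finSuccEquiv' (Fin.last n)).symm)

lemma insPerm_self {n : ℕ} (k : Fin (n + 1)) (σ : Equiv.Perm (Fin n)) :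
    insPerm k σ k = Fin.last n := by
  simp [insPerm, finSuccEquiv'_at, finSuccEquiv'_symm_none]

lemma insPerm_succAbove {n : ℕ} (k : Fin (n + 1)) (σ : Equiv.Perm (Fin n)) (j : Fin n) :
    insPerm k σ (k.succAbove j) = Fin.castSucc (σ j) := by
  simp [insPerm, finSuccEquiv'_succAbove, finSuccEquiv'_symm_some, Fin.succAbove_last]

lemma numWordRecords_insPerm {n : ℕ} (k : Fin (n + 1)) (σ : Equiv.Perm (Fin n)) :
    numWordRecords (insPerm k σ) = numWordRecords σ + (if k = 0 then 1 else 0) := by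
  classical
  have hrec : ∀ j : Fin n,
      ((∀ m, m < k.succAbove j → insPerm k σ (k.succAbove j) < insPerm k σ m) ↔
        (∀ l, l < j → σ j < σ l)) := by
    intro j
    constructor
    · intro h l hl
      have := h (k.succAbove l) (by rwa [Fin.succAbove_lt_succAbove_iff])
      rwa [insPerm_succAbove, insPerm_succAbove, Fin.castSucc_lt_castSucc_iff] at this
    · intro h m hm
      rcases eq_or_ne m k with rfl | hmk
      · rw [insPerm_self, insPerm_succAbove]
        exact Fin.castSucc_lt_last _
      · obtain ⟨l, rfl⟩ := Fin.exists_succAbove_eq hmk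
        rw [insPerm_succAbove, insPerm_succAbove, Fin.castSucc_lt_castSucc_iff]
        exact h l (by rwa [Fin.succAbove_lt_succAbove_iff] at hm)
  by_cases hk : k = 0
  · subst hk
    rw [if_pos rfl]
    have key : Nat.card {l : Fin n // ∀ m, m < l → σ l < σ m} + 1
        = Nat.card {i : Fin (n + 1) // ∀ m, m < i → insPerm 0 σ i < insPerm 0 σ m} := by
      rw [← Finite.card_option]
      refine Nat.card_eq_of_bijective (fun o =>
        o.elim ⟨0, fun m hm => absurd hm (Fin.not_lt_zero m)⟩
          (fun l => ⟨(0 : Fin (n + 1)).succAbove l.1, (hrec l.1).2 l.2⟩)) ⟨?_, ?_⟩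
      · rintro (_ | ⟨l, hl⟩) (_ | ⟨l', hl'⟩) h
        · rfl
        · simp only [Option.elim_none, Option.elim_some, Subtype.mk.injEq] at h
          exact absurd h.symm (Fin.succAbove_ne _ _)
        · simp only [Option.elim_none, Option.elim_some, Subtype.mk.injEq] at h
          exact absurd h (Fin.succAbove_ne _ _)
        · simp only [Option.elim_some, Subtype.mk.injEq] at h
          obtain rfl : l = l' := Fin.succAbove_right_injective h
          rfl
      · rintro ⟨i, hi⟩
        rcases eq_or_ne i 0 with rfl | hne
        · exact ⟨none, rfl⟩
        · obtain ⟨l, hl⟩ := Fin.exists_succAbove_eq hne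
          exact ⟨some ⟨l, (hrec l).1 (by rwa [hl])⟩, Subtype.ext hl⟩
    rw [numWordRecords, numWordRecords, ← key]
  · rw [if_neg hk, add_zero]
    have hknot : ¬ ∀ m, m < k → insPerm k σ k < insPerm k σ m := by
      intro h
      have := h 0 (Fin.pos_of_ne_zero hk)
      rw [insPerm_self] at this
      exact absurd this (not_lt.2 (Fin.le_last _))
    have key : Nat.card {l : Fin n // ∀ m, m < l → σ l < σ m}
        = Nat.card {i : Fin (n + 1) // ∀ m, m < i → insPerm k σ i < insPerm k σ m} := by
      refine Nat.card_eq_of_bijective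
        (fun l => ⟨k.succAbove l.1, (hrec l.1).2 l.2⟩) ⟨?_, ?_⟩
      · rintro ⟨l, hl⟩ ⟨l', hl'⟩ h
        simp only [Subtype.mk.injEq] at h
        obtain rfl : l = l' := Fin.succAbove_right_injective h
        rfl
      · rintro ⟨i, hi⟩
        have hne : i ≠ k := fun h => hknot (h ▸ hi)
        obtain ⟨l, hl⟩ := Fin.exists_succAbove_eq hne
        exact ⟨⟨l, (hrec l).1 (by rwa [hl])⟩, Subtype.ext hl⟩
    rw [numWordRecords, numWordRecords, key]

lemma sum_theta_pow_records (θ : ℝ) (n : ℕ) :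
    ∑ π : Equiv.Perm (Fin n), θ ^ numWordRecords π = ∏ i ∈ Finset.range n, (θ + i) := by
  classical
  induction n with
  | zero =>
      rw [Finset.prod_range_zero]
      have h : ∀ π : Equiv.Perm (Fin 0), numWordRecords π = 0 := fun π =>
        Nat.card_of_isEmpty
      simp [h]
  | succ n ih =>
      have hbij : Function.Bijective
          (fun p : Fin (n + 1) × Equiv.Perm (Fin n) => insPerm p.1 p.2) := by
        rw [Fintype.bijective_iff_injective_and_card]
        constructor
        · rintro ⟨k, σ⟩ ⟨k', σ'⟩ h
          simp only at h
          have hk : k = k' := by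
            have h1 : insPerm k σ k = Fin.last n := insPerm_self k σ
            have h2 : insPerm k' σ' k' = Fin.last n := insPerm_self k' σ'
            rw [h] at h1
            exact (insPerm k' σ').injective (h1.trans h2.symm)
          subst hk
          have hσ : σ = σ' := by
            apply Equiv.ext
            intro j
            have := congrFun (congrArg (fun e => (e : Equiv.Perm (Fin (n+1))) ∘ k.succAbove) h) j
            simp only [Function.comp_apply, insPerm_succAbove] at this
            exact Fin.castSucc_injective n this
          rw [hσ]
        · simp [Fintype.card_perm, Nat.factorial_succ]
      calc ∑ π : Equiv.Perm (Fin (n + 1)), θ ^ numWordRecords π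
          = ∑ p : Fin (n + 1) × Equiv.Perm (Fin n), θ ^ numWordRecords (insPerm p.1 p.2) :=
            (Fintype.sum_bijective _ hbij _ _ fun p => rfl).symm
        _ = ∑ k : Fin (n + 1), ∑ σ : Equiv.Perm (Fin n),
              θ ^ numWordRecords σ * (if k = 0 then θ else 1) := by
            rw [Fintype.sum_prod_type]
            refine Finset.sum_congr rfl fun k _ => Finset.sum_congr rfl fun σ _ => ?_
            rw [numWordRecords_insPerm, pow_add]
            by_cases hk : k = 0 <;> simp [hk]
        _ = (∑ k : Fin (n + 1), (if k = 0 then θ else 1)) * ∑ σ : Equiv.Perm (Fin n),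
              θ ^ numWordRecords σ := by
            rw [Finset.sum_mul_sum]
            exact Finset.sum_congr rfl fun k _ => Finset.sum_congr rfl fun σ _ => mul_comm _ _
        _ = (θ + n) * ∏ i ∈ Finset.range n, (θ + i) := by
            rw [ih]
            congr 1
            have h : ∀ k : Fin (n + 1), (if k = 0 then θ else 1)
                = (if k = 0 then θ - 1 else 0) + 1 := by
              intro k; split <;> ring
            simp_rw [h]
            rw [Finset.sum_add_distrib, Finset.sum_ite_eq' Finset.univ (0 : Fin (n + 1))
              (fun _ => θ - 1)]
            simp
        _ = ∏ i ∈ Finset.range (n + 1), (θ + i) := by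
            rw [Finset.prod_range_succ, mul_comm]

/-- If `(U_1, …, U_n)` has density `θ^{K_n(u)} (min u)^{θ-1}` on `[0,1]^n`, then the
relative order of `(U_1, …, U_n)` (the rank sequence, viewed as a random permutation
of `[n]`) takes the value `π` with probability `θ^{K'(π)} / (θ)_n`, proportional to
`θ^{K'(π)}`, where `K'(π)` is the number of lower records of `π` as a sequence. -/
theorem relOrder_ewens_distribution (n : ℕ) (θ : ℝ) (hθ : 0 < θ)
    {Ω : Type*} [MeasurableSpace Ω] (μ : Measure Ω) [IsProbabilityMeasure μ]
    (U : Fin n → Ω → ℝ) (hmeas : ∀ i, Measurable (U i))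
    (hjoint : Measure.map (fun ω i => U i ω) μ = ewensLaw n θ) :
    ∀ π : Equiv.Perm (Fin n),
      μ {ω | ∀ i j : Fin n, U i ω < U j ω ↔ π i < π j}
        = ENNReal.ofReal (θ ^ numWordRecords π / ∏ i ∈ Finset.range n, (θ + i)) := by
  classical
  intro π
  set C : Set (Fin n → ℝ) := Set.univ.pi fun _ : Fin n => Set.Icc (0 : ℝ) 1 with hC
  have hCmeas : MeasurableSet C := MeasurableSet.univ_pi fun _ => measurableSet_Icc
  set Bs : Equiv.Perm (Fin n) → Set (Fin n → ℝ) :=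
    fun ρ => {u | ∀ i j : Fin n, u i < u j ↔ ρ i < ρ j} with hBs
  have hBmeas : ∀ ρ, MeasurableSet (Bs ρ) := by
    intro ρ
    have h1 : Bs ρ = ⋂ i, ⋂ j, {u : Fin n → ℝ | u i < u j ↔ ρ i < ρ j} := by
      ext u; simp [hBs, Set.mem_iInter]
    rw [h1]
    refine MeasurableSet.iInter fun i => MeasurableSet.iInter fun j => ?_
    by_cases h : ρ i < ρ j
    · simp only [h, iff_true]
      exact measurableSet_lt (measurable_pi_apply i) (measurable_pi_apply j)
    · simp only [h, iff_false]
      exact (measurableSet_lt (measurable_pi_apply i) (measurable_pi_apply j)).compl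
  have hUmeas : Measurable (fun ω (i : Fin n) => U i ω) :=
    measurable_pi_lambda _ hmeas
  have key : ∀ ρ, μ {ω | ∀ i j : Fin n, U i ω < U j ω ↔ ρ i < ρ j} = ewensLaw n θ (Bs ρ) := by
    intro ρ
    rw [← hjoint, Measure.map_apply hUmeas (hBmeas ρ)]
    rfl
  set g : (Fin n → ℝ) → ℝ≥0∞ := fun u => ENNReal.ofReal ((⨅ i, u i) ^ (θ - 1)) with hg
  set I : Equiv.Perm (Fin n) → ℝ≥0∞ :=
    fun ρ => ∫⁻ u in Bs ρ, g u ∂(volume.restrict C) with hI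
  have hlaw : ∀ ρ, ewensLaw n θ (Bs ρ)
      = ENNReal.ofReal (θ ^ numWordRecords ρ) * I ρ := by
    intro ρ
    rw [ewensLaw, withDensity_apply _ (hBmeas ρ)]
    rw [hI]
    rw [← lintegral_const_mul' _ _ ENNReal.ofReal_ne_top]
    refine setLIntegral_congr_fun (hBmeas ρ) (fun u hu => ?_)
    have hnum : numRecords u = numWordRecords ρ :=
      Nat.card_congr (Equiv.subtypeEquivRight fun i =>
        forall_congr' fun j => imp_congr_right fun _ => hu i j)
    rw [hnum, ENNReal.ofReal_mul (by positivity)]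
  -- symmetry
  have hIeq : ∀ ρ, I ρ = I 1 := by
    intro ρ
    set T := MeasurableEquiv.piCongrLeft (fun _ : Fin n => ℝ) (ρ : Fin n ≃ Fin n) with hTdef
    have hT : ∀ (u : Fin n → ℝ) (j : Fin n), T u j = u (ρ.symm j) := by
      intro u j
      have := MeasurableEquiv.piCongrLeft_apply_apply (ρ : Fin n ≃ Fin n)
        (β := fun _ => ℝ) u (ρ.symm j)
      rwa [Equiv.apply_symm_apply] at this
    have hvol : MeasurePreserving T volume volume :=
      volume_measurePreserving_piCongrLeft (fun _ : Fin n => ℝ) (ρ : Fin n ≃ Fin n)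
    have hpreC : T ⁻¹' C = C := by
      ext u
      simp only [Set.mem_preimage, hC, Set.mem_pi, Set.mem_univ, forall_true_left]
      constructor
      · intro h i
        have := h (ρ i)
        rwa [hT, Equiv.symm_apply_apply] at this
      · intro h i
        rw [hT]
        exact h _
    have hpreB : T ⁻¹' Bs 1 = Bs ρ := by
      ext u
      simp only [Set.mem_preimage, hBs, Set.mem_setOf_eq]
      constructor
      · intro h i j
        have := h (ρ i) (ρ j)
        rw [hT, hT, Equiv.symm_apply_apply, Equiv.symm_apply_apply] at this
        simpa using this
      · intro h i j
        rw [hT, hT]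
        simpa using h (ρ.symm i) (ρ.symm j)
    have hres : MeasurePreserving T (volume.restrict C) (volume.restrict C) := by
      have := hvol.restrict_preimage (μa := volume) (μb := volume) (s := C) hCmeas
      rwa [hpreC] at this
    have hgT : ∀ u, g (T u) = g u := by
      intro u
      have hrange : (⨅ j, T u j) = ⨅ i, u i := by
        simp only [hT]
        rw [iInf, iInf]
        congr 1
        rw [show (Set.range fun j => u (ρ.symm j)) = Set.range (u ∘ ρ.symm) from rfl,
          Set.range_comp, Equiv.range_eq_univ, Set.image_univ]
      rw [hg]
      simp only [hrange]
    calc I ρ = ∫⁻ u in Bs ρ, g (T u) ∂(volume.restrict C) := by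
          rw [hI]
          exact lintegral_congr fun u => (hgT u).symm
      _ = ∫⁻ u in ⇑T '' (Bs ρ), g u ∂(volume.restrict C) :=
          hres.setLIntegral_comp_emb T.measurableEmbedding g (Bs ρ)
      _ = I 1 := by rw [hI, ← hpreB, Set.image_preimage_eq _ T.surjective]
  -- total mass
  have htot : ewensLaw n θ Set.univ = 1 := by
    rw [← hjoint, Measure.map_apply hUmeas MeasurableSet.univ, Set.preimage_univ, measure_univ]
  -- null diagonal
  set D : Set (Fin n → ℝ) :=
    ⋃ (i : Fin n), ⋃ (j : Fin n), ⋃ (_ : i ≠ j), {u : Fin n → ℝ | u i = u j} with hD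
  have hDnull : ewensLaw n θ D = 0 := by
    have hDvol : volume D = 0 := by
      refine measure_iUnion_null fun i => measure_iUnion_null fun j =>
        measure_iUnion_null fun hij => ?_
      have hker : {u : Fin n → ℝ | u i = u j}
          = (LinearMap.ker ((LinearMap.proj i : (Fin n → ℝ) →ₗ[ℝ] ℝ) - LinearMap.proj j)
              : Set (Fin n → ℝ)) := by
        ext u
        simp [LinearMap.mem_ker, sub_eq_zero, eq_comm]
      rw [hker]
      refine Measure.addHaar_submodule _ _ ?_
      intro htop
      have hx : Function.update (0 : Fin n → ℝ) i 1
          ∈ LinearMap.ker ((LinearMap.proj i : (Fin n → ℝ) →ₗ[ℝ] ℝ) - LinearMap.proj j) := by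
        rw [htop]; exact Submodule.mem_top
      simp [LinearMap.mem_ker, sub_eq_zero, Function.update_apply, hij.symm] at hx
    have hres0 : (volume.restrict C) D = 0 :=
      le_antisymm (le_trans (Measure.le_iff'.1 Measure.restrict_le_self D) hDvol.le) (zero_le)
    exact (withDensity_absolutelyContinuous _ _) hres0
  -- covering
  have hcover : (Set.univ : Set (Fin n → ℝ)) ⊆ (⋃ ρ : Equiv.Perm (Fin n), Bs ρ) ∪ D := by
    intro u _
    by_cases hinj : Function.Injective u
    · left
      have hsm : StrictMono (u ∘ (Tuple.sort u : Equiv.Perm (Fin n))) :=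
        (Tuple.monotone_sort u).strictMono_of_injective (hinj.comp (Equiv.injective _))
      refine Set.mem_iUnion.2 ⟨(Tuple.sort u)⁻¹, fun i j => ?_⟩
      have h := hsm.lt_iff_lt (a := (Tuple.sort u)⁻¹ i) (b := (Tuple.sort u)⁻¹ j)
      simpa using h
    · right
      obtain ⟨a, b, hab, hne⟩ := Function.not_injective_iff.1 hinj
      exact Set.mem_iUnion.2 ⟨a, Set.mem_iUnion.2 ⟨b, Set.mem_iUnion.2 ⟨hne, hab⟩⟩⟩
  -- disjointness
  have hdisj : Pairwise (Function.onFun Disjoint Bs) := by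
    intro ρ ρ' hne
    refine Set.disjoint_left.2 fun u hu hu' => hne ?_
    have h : ∀ i j, ρ i < ρ j ↔ ρ' i < ρ' j := fun i j => (hu i j).symm.trans (hu' i j)
    have hsm : StrictMono (fun x => ρ' (ρ.symm x)) := by
      intro a b hab
      have := (h (ρ.symm a) (ρ.symm b)).1
      simp only [Equiv.apply_symm_apply] at this
      exact this hab
    have hid : (fun x => ρ' (ρ.symm x)) = id := by
      have hwf : WellFoundedLT (Fin n) := inferInstance
      refine (hsm.range_inj strictMono_id).1 ?_
      rw [Set.range_id, show Set.range (fun x => ρ' (ρ.symm x)) = Set.range (⇑ρ' ∘ ⇑ρ.symm)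
        from rfl, Set.range_comp, Equiv.range_eq_univ, Set.image_univ, Equiv.range_eq_univ]
    apply Equiv.ext
    intro x
    have := congrFun hid (ρ x)
    simpa using this.symm
  -- sum to one
  have hsum : ∑ ρ : Equiv.Perm (Fin n), ewensLaw n θ (Bs ρ) = 1 := by
    have hU : ewensLaw n θ (⋃ ρ, Bs ρ) = ∑ ρ, ewensLaw n θ (Bs ρ) := by
      rw [measure_iUnion hdisj hBmeas, tsum_fintype]
    have h1 : ewensLaw n θ (⋃ ρ, Bs ρ) = 1 := by
      refine le_antisymm (htot ▸ measure_mono (Set.subset_univ _)) ?_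
      calc (1 : ℝ≥0∞) = ewensLaw n θ Set.univ := htot.symm
        _ ≤ ewensLaw n θ ((⋃ ρ, Bs ρ) ∪ D) := measure_mono hcover
        _ ≤ ewensLaw n θ (⋃ ρ, Bs ρ) + ewensLaw n θ D := measure_union_le _ _
        _ = ewensLaw n θ (⋃ ρ, Bs ρ) := by rw [hDnull, add_zero]
    rw [← hU, h1]
  -- solve for I 1
  have hprodpos : 0 < ∏ i ∈ Finset.range n, (θ + (i : ℝ)) :=
    Finset.prod_pos fun i _ => by positivity
  set S : ℝ≥0∞ := ENNReal.ofReal (∏ i ∈ Finset.range n, (θ + (i : ℝ))) with hS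
  have hmul : S * I 1 = 1 := by
    rw [← hsum]
    have : ∀ ρ : Equiv.Perm (Fin n), ewensLaw n θ (Bs ρ)
        = ENNReal.ofReal (θ ^ numWordRecords ρ) * I 1 := fun ρ => by rw [hlaw ρ, hIeq ρ]
    simp_rw [this]
    rw [← Finset.sum_mul, ← ENNReal.ofReal_sum_of_nonneg (fun ρ _ => by positivity),
      sum_theta_pow_records]
  have hS0 : S ≠ 0 := by
    rw [hS, Ne, ENNReal.ofReal_eq_zero, not_le]
    exact hprodpos
  have hI1 : I 1 = S⁻¹ := by
    calc I 1 = S⁻¹ * (S * I 1) := by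
          rw [← mul_assoc, ENNReal.inv_mul_cancel hS0 ENNReal.ofReal_ne_top, one_mul]
      _ = S⁻¹ := by rw [hmul, mul_one]
  rw [key π, hlaw π, hIeq π, hI1, ENNReal.ofReal_div_of_pos hprodpos, div_eq_mul_inv, hS]
end

section
/- Let θ > 0, p ∈ (0,1), and let (K_ℓ)_{ℓ≥1} be independent Poisson random variables with means θ(1−p)^ℓ/ℓ. Then N = Σ_{ℓ≥1} ℓ K_ℓ is almost surely finite and has the negative binomial distribution P(N = n) = ((θ)_n / n!) (1−p)^n p^θ for n ≥ 0. -/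
open MeasureTheory ProbabilityTheory
open scoped ENNReal

open Finset MeasureTheory ProbabilityTheory Filter
open scoped ENNReal Topology

/-- Functions counting parts: `f i` = number of parts of size `i+1`, weighted sum `m`. -/
def cycSet (n m : ℕ) : Finset (Fin n → ℕ) :=
  (Fintype.piFinset fun _ => Finset.range (n + 1)).filter
    fun f => ∑ i : Fin n, ((i : ℕ) + 1) * f i = m

noncomputable def cycWgt (θ : ℝ) {n : ℕ} (f : Fin n → ℕ) : ℝ :=
  ∏ i : Fin n, θ ^ (f i) / ((((i : ℕ) : ℝ) + 1) ^ (f i) * (Nat.factorial (f i) : ℝ))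

lemma mem_cycSet {n m : ℕ} (hmn : m ≤ n) {f : Fin n → ℕ} :
    f ∈ cycSet n m ↔ ∑ i : Fin n, ((i : ℕ) + 1) * f i = m := by
  simp only [cycSet, mem_filter, Fintype.mem_piFinset, mem_range]
  refine ⟨fun h => h.2, fun h => ⟨fun i => ?_, h⟩⟩
  have h1 : ((i : ℕ) + 1) * f i ≤ m :=
    h ▸ Finset.single_le_sum (f := fun i : Fin n => ((i : ℕ) + 1) * f i)
      (fun _ _ => Nat.zero_le _) (mem_univ i)
  have h2 : f i ≤ ((i : ℕ) + 1) * f i := Nat.le_mul_of_pos_left _ (Nat.succ_pos _)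
  omega

lemma cycSet_zero (n : ℕ) : cycSet n 0 = {fun _ => 0} := by
  ext f
  simp only [mem_cycSet (Nat.zero_le n), Finset.sum_eq_zero_iff, mem_univ, true_implies,
    mem_singleton]
  constructor
  · intro h; funext i; simpa using h i
  · intro h; subst h; intro i; simp

lemma poch_sum (θ : ℝ) (m : ℕ) :
    θ * ∑ j ∈ range m, (∏ i ∈ range j, (θ + i)) / (Nat.factorial j : ℝ)
      = (∏ i ∈ range m, (θ + i)) / (Nat.factorial m : ℝ) * m := by
  induction m with
  | zero => simp
  | succ m ih =>
    rw [Finset.sum_range_succ, mul_add, ih, Finset.prod_range_succ, Nat.factorial_succ]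
    have hm : (Nat.factorial m : ℝ) ≠ 0 := Nat.cast_ne_zero.2 (Nat.factorial_ne_zero m)
    have hm1 : ((m + 1 : ℕ) : ℝ) ≠ 0 := Nat.cast_ne_zero.2 (Nat.succ_ne_zero m)
    push_cast
    field_simp
    ring

lemma cyc_inner (θ : ℝ) {n m : ℕ} (hmn : m ≤ n) (i : Fin n) (hi : (i : ℕ) + 1 ≤ m) :
    ∑ f ∈ cycSet n m, ((((i : ℕ) : ℝ) + 1) * (f i : ℝ)) * cycWgt θ f
      = θ * ∑ g ∈ cycSet n (m - ((i : ℕ) + 1)), cycWgt θ g := by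
  classical
  rw [Finset.mul_sum]
  rw [← Finset.sum_filter_of_ne (p := fun f : Fin n → ℕ => f i ≠ 0)
    (fun f _ hf => by
      intro h0
      apply hf
      rw [h0]
      simp)]
  refine Finset.sum_nbij' (fun f => Function.update f i (f i - 1))
    (fun g => Function.update g i (g i + 1)) ?_ ?_ ?_ ?_ ?_
  · -- to: mem
    intro f hf
    rw [mem_filter, mem_cycSet hmn] at hf
    obtain ⟨hsum, hne⟩ := hf
    rw [mem_cycSet (le_trans (Nat.sub_le _ _) hmn)]
    have e1 : ∑ j : Fin n, ((j : ℕ) + 1) * Function.update f i (f i - 1) j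
        = ((i : ℕ) + 1) * (f i - 1) + ∑ j ∈ Finset.univ.erase i, ((j : ℕ) + 1) * f j := by
      rw [← Finset.add_sum_erase _ _ (mem_univ i), Function.update_self]
      congr 1
      exact Finset.sum_congr rfl fun j hj => by
        rw [Function.update_of_ne (Finset.ne_of_mem_erase hj)]
    have e2 : ((i : ℕ) + 1) * f i + ∑ j ∈ Finset.univ.erase i, ((j : ℕ) + 1) * f j = m :=
      (Finset.add_sum_erase _ (fun j : Fin n => ((j : ℕ) + 1) * f j) (mem_univ i)).trans hsum
    rw [e1]
    obtain ⟨k, hk⟩ := Nat.exists_eq_add_of_le (Nat.one_le_iff_ne_zero.2 hne)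
    rw [hk] at e2 ⊢
    have h2 : ((i : ℕ) + 1) * (1 + k) = ((i : ℕ) + 1) + ((i : ℕ) + 1) * k := by ring
    rw [h2] at e2
    simp only [Nat.add_sub_cancel_left]
    omega
  · -- from: mem
    intro g hg
    rw [mem_cycSet (le_trans (Nat.sub_le _ _) hmn)] at hg
    rw [mem_filter, mem_cycSet hmn]
    refine ⟨?_, by simp⟩
    have e1 : ∑ j : Fin n, ((j : ℕ) + 1) * Function.update g i (g i + 1) j
        = ((i : ℕ) + 1) * (g i + 1) + ∑ j ∈ Finset.univ.erase i, ((j : ℕ) + 1) * g j := by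
      rw [← Finset.add_sum_erase _ _ (mem_univ i), Function.update_self]
      congr 1
      exact Finset.sum_congr rfl fun j hj => by
        rw [Function.update_of_ne (Finset.ne_of_mem_erase hj)]
    have e2 : ((i : ℕ) + 1) * g i + ∑ j ∈ Finset.univ.erase i, ((j : ℕ) + 1) * g j
        = m - ((i : ℕ) + 1) :=
      (Finset.add_sum_erase _ (fun j : Fin n => ((j : ℕ) + 1) * g j) (mem_univ i)).trans hg
    rw [e1]
    have h2 : ((i : ℕ) + 1) * (g i + 1) = ((i : ℕ) + 1) * g i + ((i : ℕ) + 1) := by ring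
    rw [h2]
    omega
  · -- left inverse
    intro f hf
    rw [mem_filter] at hf
    funext j
    rcases eq_or_ne j i with rfl | hne
    · simp only [Function.update_self]
      have := hf.2
      omega
    · simp only [Function.update_of_ne hne]
  · -- right inverse
    intro g _
    funext j
    rcases eq_or_ne j i with rfl | hne
    · simp only [Function.update_self, Nat.add_sub_cancel]
    · simp only [Function.update_of_ne hne]
  · -- summand equality
    intro f hf
    rw [mem_filter] at hf
    obtain ⟨-, hne⟩ := hf
    unfold cycWgt
    rw [← Finset.mul_prod_erase _ _ (mem_univ i), ← Finset.mul_prod_erase _ _ (mem_univ i)]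
    have herase : ∏ j ∈ Finset.univ.erase i,
          θ ^ (Function.update f i (f i - 1) j)
            / ((((j : ℕ) : ℝ) + 1) ^ (Function.update f i (f i - 1) j)
                * (Nat.factorial (Function.update f i (f i - 1) j) : ℝ))
        = ∏ j ∈ Finset.univ.erase i,
            θ ^ (f j) / ((((j : ℕ) : ℝ) + 1) ^ (f j) * (Nat.factorial (f j) : ℝ)) :=
      Finset.prod_congr rfl fun j hj => by
        rw [Function.update_of_ne (Finset.ne_of_mem_erase hj)]
    beta_reduce
    rw [herase, Function.update_self]
    obtain ⟨k, hk⟩ := Nat.exists_eq_add_of_le (Nat.one_le_iff_ne_zero.2 hne)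
    rw [hk]
    simp only [Nat.add_sub_cancel_left]
    have h1 : (1 : ℕ) + k = k + 1 := by omega
    rw [h1, pow_succ, pow_succ, Nat.factorial_succ]
    have hia : (((i : ℕ) : ℝ) + 1) ≠ 0 := by positivity
    have hiak : (((i : ℕ) : ℝ) + 1) ^ k ≠ 0 := pow_ne_zero _ hia
    have hkf : (Nat.factorial k : ℝ) ≠ 0 := Nat.cast_ne_zero.2 (Nat.factorial_ne_zero k)
    have hk1 : ((k : ℝ) + 1) ≠ 0 := by positivity
    push_cast
    field_simp

lemma cyc_rec (θ : ℝ) {n m : ℕ} (hm : 1 ≤ m) (hmn : m ≤ n) :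
    (m : ℝ) * ∑ f ∈ cycSet n m, cycWgt θ f
      = θ * ∑ j ∈ range m, ∑ g ∈ cycSet n j, cycWgt θ g := by
  classical
  have step1 : (m : ℝ) * ∑ f ∈ cycSet n m, cycWgt θ f
      = ∑ i : Fin n, ∑ f ∈ cycSet n m, ((((i : ℕ) : ℝ) + 1) * (f i : ℝ)) * cycWgt θ f := by
    rw [Finset.mul_sum, Finset.sum_comm]
    refine Finset.sum_congr rfl fun f hf => ?_
    rw [mem_cycSet hmn] at hf
    have : (m : ℝ) = ∑ i : Fin n, (((i : ℕ) : ℝ) + 1) * (f i : ℝ) := by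
      rw [← hf]
      push_cast
      ring
    rw [this, Finset.sum_mul]
  rw [step1]
  have step2 : ∀ i : Fin n,
      ∑ f ∈ cycSet n m, ((((i : ℕ) : ℝ) + 1) * (f i : ℝ)) * cycWgt θ f
        = if (i : ℕ) + 1 ≤ m then θ * ∑ g ∈ cycSet n (m - ((i : ℕ) + 1)), cycWgt θ g
          else 0 := by
    intro i
    split_ifs with hle
    · exact cyc_inner θ hmn i hle
    · refine Finset.sum_eq_zero fun f hf => ?_
      rw [mem_cycSet hmn] at hf
      have h1 : ((i : ℕ) + 1) * f i ≤ m :=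
        hf ▸ Finset.single_le_sum (f := fun i : Fin n => ((i : ℕ) + 1) * f i)
          (fun _ _ => Nat.zero_le _) (mem_univ i)
      have h2 : f i = 0 := by
        by_contra h0
        have : (i : ℕ) + 1 ≤ ((i : ℕ) + 1) * f i :=
          Nat.le_mul_of_pos_right _ (Nat.pos_of_ne_zero h0)
        omega
      rw [h2]
      simp
  simp only [step2]
  rw [Fin.sum_univ_eq_sum_range
    (fun ℓ => if ℓ + 1 ≤ m then θ * ∑ g ∈ cycSet n (m - (ℓ + 1)), cycWgt θ g else 0) n]
  rw [← Finset.sum_subset (Finset.range_subset_range.2 hmn)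
    (fun ℓ _ hℓ => by
      rw [Finset.mem_range, not_lt] at hℓ
      rw [if_neg (by omega)])]
  have step3 : ∑ ℓ ∈ range m,
      (if ℓ + 1 ≤ m then θ * ∑ g ∈ cycSet n (m - (ℓ + 1)), cycWgt θ g else 0)
      = ∑ ℓ ∈ range m, θ * ∑ g ∈ cycSet n (m - 1 - ℓ), cycWgt θ g := by
    refine Finset.sum_congr rfl fun ℓ hℓ => ?_
    rw [Finset.mem_range] at hℓ
    rw [if_pos (by omega)]
    have he : m - (ℓ + 1) = m - 1 - ℓ := by omega
    rw [he]
  rw [step3, Finset.sum_range_reflect (fun j => θ * ∑ g ∈ cycSet n j, cycWgt θ g) m,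
    ← Finset.mul_sum]

lemma cyc_sum (θ : ℝ) {n : ℕ} :
    ∀ m, m ≤ n → ∑ f ∈ cycSet n m, cycWgt θ f
      = (∏ i ∈ range m, (θ + i)) / (Nat.factorial m : ℝ) := by
  intro m
  induction m using Nat.strong_induction_on with
  | _ m ih =>
    intro hmn
    rcases Nat.eq_zero_or_pos m with rfl | hm
    · rw [cycSet_zero]
      simp [cycWgt]
    · have h1 := cyc_rec θ hm hmn
      have h2 : ∑ j ∈ range m, ∑ g ∈ cycSet n j, cycWgt θ g
          = ∑ j ∈ range m, (∏ i ∈ range j, (θ + i)) / (Nat.factorial j : ℝ) :=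
        Finset.sum_congr rfl fun j hj =>
          ih j (Finset.mem_range.1 hj) (le_trans (le_of_lt (Finset.mem_range.1 hj)) hmn)
      rw [h2, poch_sum] at h1
      have hm' : (m : ℝ) ≠ 0 := Nat.cast_ne_zero.2 (by omega)
      have := h1.trans (mul_comm _ (m : ℝ))
      exact mul_left_cancel₀ hm' this

open Finset MeasureTheory ProbabilityTheory Filter
open scoped ENNReal Topology

lemma poissonHasSum (lam : ℝ) :
    HasSum (fun k : ℕ => lam ^ k / (Nat.factorial k : ℝ)) (Real.exp lam) := by
  rw [Real.exp_eq_exp_ℝ]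
  exact NormedSpace.expSeries_div_hasSum_exp lam

lemma poissonMeanHasSum (lam : ℝ) :
    HasSum (fun k : ℕ => (k : ℝ) * (Real.exp (-lam) * lam ^ k / (Nat.factorial k : ℝ))) lam := by
  have hv : Real.exp (-lam) * lam * Real.exp lam = lam := by
    rw [mul_comm (Real.exp (-lam)) lam, mul_assoc, ← Real.exp_add]
    simp
  have h2 := (poissonHasSum lam).mul_left (Real.exp (-lam) * lam)
  rw [hv] at h2
  rw [← hasSum_nat_add_iff' 1]
  have hfun : (fun n : ℕ => ((n + 1 : ℕ) : ℝ)
        * (Real.exp (-lam) * lam ^ (n + 1) / (Nat.factorial (n + 1) : ℝ)))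
      = fun n : ℕ => Real.exp (-lam) * lam * (lam ^ n / (Nat.factorial n : ℝ)) := by
    funext n
    have h1 : (Nat.factorial n : ℝ) ≠ 0 := Nat.cast_ne_zero.2 (Nat.factorial_ne_zero n)
    have h2 : ((n : ℝ) + 1) ≠ 0 := by positivity
    rw [pow_succ, Nat.factorial_succ]
    push_cast
    field_simp
  simp only [Finset.range_one, Finset.sum_singleton, Nat.cast_zero, zero_mul, sub_zero, hfun]
  exact h2

lemma poissonMeanTsum (lam : ℝ) (h0 : 0 ≤ lam) :
    ∑' k : ℕ, (k : ℝ≥0∞) * ENNReal.ofReal (Real.exp (-lam) * lam ^ k / (Nat.factorial k : ℝ))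
      = ENNReal.ofReal lam := by
  have hterm : ∀ k : ℕ, (k : ℝ≥0∞)
        * ENNReal.ofReal (Real.exp (-lam) * lam ^ k / (Nat.factorial k : ℝ))
      = ENNReal.ofReal ((k : ℝ) * (Real.exp (-lam) * lam ^ k / (Nat.factorial k : ℝ))) := by
    intro k
    rw [ENNReal.ofReal_mul (by positivity : (0:ℝ) ≤ (k : ℝ)), ENNReal.ofReal_natCast]
  simp_rw [hterm]
  rw [← ENNReal.ofReal_tsum_of_nonneg (fun k => by positivity)
    (poissonMeanHasSum lam).summable, (poissonMeanHasSum lam).tsum_eq]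

def extFn {n : ℕ} (f : Fin n → ℕ) : ℕ → ℕ := fun ℓ => if h : ℓ < n then f ⟨ℓ, h⟩ else 0

lemma extFn_coe {n : ℕ} (f : Fin n → ℕ) (i : Fin n) : extFn f (i : ℕ) = f i := by
  simp [extFn]

lemma extFn_ge {n : ℕ} (f : Fin n → ℕ) {ℓ : ℕ} (h : n ≤ ℓ) : extFn f ℓ = 0 :=
  dif_neg (by omega)

lemma cycWgt_nonneg {θ : ℝ} (hθ : 0 ≤ θ) {n : ℕ} (f : Fin n → ℕ) : 0 ≤ cycWgt θ f :=
  Finset.prod_nonneg fun i _ => by positivity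

/-- Let `(K_ℓ)_{ℓ ≥ 1}` (indexed here by `ℓ : ℕ` standing for `ℓ+1`) be independent
Poisson variables with means `θ(1-p)^ℓ/ℓ`.  Then `N = Σ_ℓ ℓ K_ℓ` is a.s. finite and
has the negative binomial distribution `P(N = n) = ((θ)_n/n!)(1-p)^n p^θ`. -/
theorem sum_poisson_negBinomial (θ p : ℝ) (hθ : 0 < θ) (hp : p ∈ Set.Ioo (0 : ℝ) 1)
    {Ω : Type*} [MeasurableSpace Ω] (μ : Measure Ω) [IsProbabilityMeasure μ]
    (K : ℕ → Ω → ℕ) (hmeas : ∀ ℓ, Measurable (K ℓ))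
    (hind : iIndepFun K μ)
    (hpois : ∀ ℓ : ℕ, ∀ k : ℕ,
      μ {ω | K ℓ ω = k}
        = ENNReal.ofReal (Real.exp (-(θ * (1 - p) ^ (ℓ + 1) / (ℓ + 1)))
            * (θ * (1 - p) ^ (ℓ + 1) / (ℓ + 1)) ^ k / k.factorial)) :
    (∀ᵐ ω ∂μ, (∑' ℓ : ℕ, ((ℓ + 1) * K ℓ ω : ℝ≥0∞)) ≠ ⊤) ∧
    ∀ n : ℕ,
      μ {ω | (∑' ℓ : ℕ, ((ℓ + 1) * K ℓ ω : ℝ≥0∞)) = n}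
        = ENNReal.ofReal
            ((∏ i ∈ Finset.range n, (θ + i)) / n.factorial * (1 - p) ^ n * p ^ θ) := by
  obtain ⟨hp0, hp1⟩ := hp
  have hq0 : (0:ℝ) < 1 - p := by linarith
  have hq1 : (1:ℝ) - p < 1 := by linarith
  set lam : ℕ → ℝ := fun ℓ => θ * (1 - p) ^ (ℓ + 1) / ((ℓ : ℝ) + 1) with hlam
  have hlam_nonneg : ∀ ℓ, 0 ≤ lam ℓ := fun ℓ => by
    have : (0:ℝ) < 1 - p := hq0
    positivity
  have hpois' : ∀ ℓ k : ℕ, μ (K ℓ ⁻¹' {k})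
      = ENNReal.ofReal (Real.exp (-lam ℓ) * lam ℓ ^ k / (Nat.factorial k : ℝ)) := by
    intro ℓ k
    have h := hpois ℓ k
    have hset : K ℓ ⁻¹' {k} = {ω | K ℓ ω = k} := by
      ext ω; simp [Set.mem_preimage]
    rw [hset, h]
  -- sum of the lambdas
  have hlogsum : HasSum lam (-(θ * Real.log p)) := by
    have h := Real.hasSum_pow_div_log_of_abs_lt_one
      (x := 1 - p) (by rw [abs_of_pos hq0]; linarith)
    rw [sub_sub_cancel] at h
    have h2 := h.mul_left θ
    have hfun : (fun ℓ : ℕ => θ * ((1 - p) ^ (ℓ + 1) / ((ℓ : ℝ) + 1))) = lam := by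
      funext ℓ
      simp only [hlam]
      rw [mul_div_assoc]
    have hfun2 : ∀ ℓ : ℕ, ((ℓ : ℝ) + 1) = ((ℓ + 1 : ℕ) : ℝ) := fun ℓ => by push_cast; ring
    rw [mul_neg] at h2
    exact hfun ▸ h2
  -- probability of an elementary cylinder event
  have elem : ∀ (n : ℕ) (a : ℕ → ℕ), (∀ ℓ, n ≤ ℓ → a ℓ = 0) →
      μ (⋂ ℓ : ℕ, K ℓ ⁻¹' {a ℓ})
        = ENNReal.ofReal (Real.exp (θ * Real.log p)
            * ∏ ℓ ∈ Finset.range n, (lam ℓ ^ a ℓ / (Nat.factorial (a ℓ) : ℝ))) := by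
    intro n a ha
    set s : ℕ → Set Ω := fun m => ⋂ ℓ ∈ Finset.range m, K ℓ ⁻¹' {a ℓ} with hs
    have hsmeas : ∀ m, MeasurableSet (s m) := fun m =>
      MeasurableSet.biInter (Set.to_countable _)
        fun ℓ _ => (hmeas ℓ) (measurableSet_singleton _)
    have hanti : Antitone s := by
      intro m m' hmm' ω hω
      simp only [hs, Set.mem_iInter, Finset.mem_range] at hω ⊢
      exact fun ℓ hℓ => hω ℓ (lt_of_lt_of_le hℓ hmm')
    have hfinprod : ∀ m, μ (s m) = ENNReal.ofReal (∏ ℓ ∈ Finset.range m,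
        (Real.exp (-lam ℓ) * lam ℓ ^ a ℓ / (Nat.factorial (a ℓ) : ℝ))) := by
      intro m
      have hprod := hind.measure_inter_preimage_eq_mul (Finset.range m)
        (sets := fun i => ({a i} : Set ℕ)) (fun i _ => measurableSet_singleton (a i))
      rw [hs]
      rw [hprod, ENNReal.ofReal_prod_of_nonneg (fun ℓ _ => by positivity)]
      exact Finset.prod_congr rfl fun ℓ _ => hpois' ℓ (a ℓ)
    have hiI : ⋂ m, s m = ⋂ ℓ, K ℓ ⁻¹' {a ℓ} := by
      ext ω
      simp only [hs, Set.mem_iInter, Finset.mem_range]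
      exact ⟨fun h ℓ => h (ℓ + 1) ℓ (Nat.lt_succ_self ℓ), fun h m ℓ _ => h ℓ⟩
    have hmlim := tendsto_measure_iInter_atTop (μ := μ)
      (fun m => (hsmeas m).nullMeasurableSet) hanti ⟨0, measure_ne_top μ _⟩
    rw [hiI] at hmlim
    have hrlim : Tendsto (fun m => ∏ ℓ ∈ Finset.range m,
        (Real.exp (-lam ℓ) * lam ℓ ^ a ℓ / (Nat.factorial (a ℓ) : ℝ))) atTop
        (𝓝 (Real.exp (θ * Real.log p)
          * ∏ ℓ ∈ Finset.range n, (lam ℓ ^ a ℓ / (Nat.factorial (a ℓ) : ℝ)))) := by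
      have heq : ∀ m, n ≤ m → ∏ ℓ ∈ Finset.range m,
          (Real.exp (-lam ℓ) * lam ℓ ^ a ℓ / (Nat.factorial (a ℓ) : ℝ))
          = Real.exp (-(∑ ℓ ∈ Finset.range m, lam ℓ))
            * ∏ ℓ ∈ Finset.range n, (lam ℓ ^ a ℓ / (Nat.factorial (a ℓ) : ℝ)) := by
        intro m hnm
        have h1 : ∀ ℓ : ℕ, Real.exp (-lam ℓ) * lam ℓ ^ a ℓ / (Nat.factorial (a ℓ) : ℝ)
            = Real.exp (-lam ℓ) * (lam ℓ ^ a ℓ / (Nat.factorial (a ℓ) : ℝ)) :=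
          fun ℓ => mul_div_assoc _ _ _
        calc ∏ ℓ ∈ Finset.range m,
            (Real.exp (-lam ℓ) * lam ℓ ^ a ℓ / (Nat.factorial (a ℓ) : ℝ))
            = (∏ ℓ ∈ Finset.range m, Real.exp (-lam ℓ))
              * ∏ ℓ ∈ Finset.range m, (lam ℓ ^ a ℓ / (Nat.factorial (a ℓ) : ℝ)) := by
              rw [← Finset.prod_mul_distrib]
              exact Finset.prod_congr rfl fun ℓ _ => h1 ℓ
          _ = Real.exp (-(∑ ℓ ∈ Finset.range m, lam ℓ))
              * ∏ ℓ ∈ Finset.range n, (lam ℓ ^ a ℓ / (Nat.factorial (a ℓ) : ℝ)) := by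
              congr 1
              · rw [← Real.exp_sum]
                congr 1
                rw [← Finset.sum_neg_distrib]
              · refine (Finset.prod_subset (Finset.range_subset_range.2 hnm) ?_).symm
                intro ℓ _ hℓ
                rw [Finset.mem_range, not_lt] at hℓ
                rw [ha ℓ hℓ]
                simp
      have hsum2 : Tendsto (fun m => ∑ ℓ ∈ Finset.range m, lam ℓ) atTop
          (𝓝 (-(θ * Real.log p))) := hlogsum.tendsto_sum_nat
      have hc : Tendsto (fun m => Real.exp (-(∑ ℓ ∈ Finset.range m, lam ℓ))
          * ∏ ℓ ∈ Finset.range n, (lam ℓ ^ a ℓ / (Nat.factorial (a ℓ) : ℝ))) atTop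
          (𝓝 (Real.exp (θ * Real.log p)
            * ∏ ℓ ∈ Finset.range n, (lam ℓ ^ a ℓ / (Nat.factorial (a ℓ) : ℝ)))) := by
        have := ((Real.continuous_exp.tendsto _).comp hsum2.neg).mul_const
          (∏ ℓ ∈ Finset.range n, (lam ℓ ^ a ℓ / (Nat.factorial (a ℓ) : ℝ)))
        rw [neg_neg] at this
        exact this
      exact hc.congr' (Filter.eventually_atTop.2 ⟨n, fun m hm => (heq m hm).symm⟩)
    have h1 : Tendsto (fun m => μ (s m)) atTop
        (𝓝 (ENNReal.ofReal (Real.exp (θ * Real.log p)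
          * ∏ ℓ ∈ Finset.range n, (lam ℓ ^ a ℓ / (Nat.factorial (a ℓ) : ℝ))))) := by
      have := (ENNReal.continuous_ofReal.tendsto _).comp hrlim
      refine this.congr fun m => ?_
      rw [Function.comp_apply, hfinprod m]
    exact tendsto_nhds_unique hmlim h1
  -- cast helper
  have hcast : ∀ (ω : Ω) (m : ℕ), ∑ ℓ ∈ Finset.range m, ((ℓ : ℝ≥0∞) + 1) * (K ℓ ω : ℝ≥0∞)
      = ((∑ ℓ ∈ Finset.range m, (ℓ + 1) * K ℓ ω : ℕ) : ℝ≥0∞) := by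
    intro ω m
    rw [Nat.cast_sum]
    exact Finset.sum_congr rfl fun ℓ _ => by push_cast; ring
  -- Part 2: the distribution
  have key : ∀ n : ℕ,
      μ {ω | (∑' ℓ : ℕ, ((ℓ + 1) * K ℓ ω : ℝ≥0∞)) = n}
        = ENNReal.ofReal
            ((∏ i ∈ Finset.range n, (θ + i)) / n.factorial * (1 - p) ^ n * p ^ θ) := by
    intro n
    classical
    have hEvent : {ω | (∑' ℓ : ℕ, ((ℓ + 1) * K ℓ ω : ℝ≥0∞)) = n}
        = ⋃ f ∈ cycSet n n, ⋂ ℓ : ℕ, K ℓ ⁻¹' {extFn f ℓ} := by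
      ext ω
      simp only [Set.mem_setOf_eq, Set.mem_iUnion, Set.mem_iInter, Set.mem_preimage,
        Set.mem_singleton_iff]
      constructor
      · intro h
        have hterm : ∀ ℓ : ℕ, ((ℓ : ℝ≥0∞) + 1) * (K ℓ ω : ℝ≥0∞) ≤ (n : ℝ≥0∞) := by
          intro ℓ
          rw [← h]
          exact ENNReal.le_tsum ℓ
        have hzero : ∀ ℓ, n ≤ ℓ → K ℓ ω = 0 := by
          intro ℓ hℓ
          by_contra h0
          have h1 : ((ℓ : ℝ≥0∞) + 1) * 1 ≤ ((ℓ : ℝ≥0∞) + 1) * (K ℓ ω : ℝ≥0∞) := by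
            refine mul_le_mul_right ?_ _
            exact_mod_cast Nat.one_le_iff_ne_zero.2 h0
          rw [mul_one] at h1
          have h2 := h1.trans (hterm ℓ)
          have h3 : ℓ + 1 ≤ n := by exact_mod_cast h2
          omega
        have hsum : (∑' ℓ : ℕ, ((ℓ : ℝ≥0∞) + 1) * (K ℓ ω : ℝ≥0∞))
            = ∑ ℓ ∈ Finset.range n, ((ℓ : ℝ≥0∞) + 1) * (K ℓ ω : ℝ≥0∞) := by
          refine tsum_eq_sum ?_
          intro ℓ hℓ
          rw [Finset.mem_range, not_lt] at hℓ
          rw [hzero ℓ hℓ]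
          simp
        rw [hsum, hcast ω n] at h
        have hnat : (∑ ℓ ∈ Finset.range n, (ℓ + 1) * K ℓ ω) = n := by exact_mod_cast h
        refine ⟨fun i => K i ω, ?_, ?_⟩
        · rw [mem_cycSet le_rfl]
          rw [Fin.sum_univ_eq_sum_range (fun ℓ => (ℓ + 1) * K ℓ ω) n]
          exact hnat
        · intro ℓ
          unfold extFn
          split_ifs with hℓ
          · rfl
          · exact hzero ℓ (le_of_not_gt hℓ)
      · rintro ⟨f, hf, hK⟩
        have hz : ∀ ℓ ∉ Finset.range n, ((ℓ : ℝ≥0∞) + 1) * (K ℓ ω : ℝ≥0∞) = 0 := by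
          intro ℓ hℓ
          rw [Finset.mem_range, not_lt] at hℓ
          rw [hK ℓ, extFn_ge f hℓ]
          simp
        rw [tsum_eq_sum hz, hcast ω n]
        have hS : (∑ ℓ ∈ Finset.range n, (ℓ + 1) * K ℓ ω) = n := by
          have e1 : ∀ ℓ ∈ Finset.range n, (ℓ + 1) * K ℓ ω = (ℓ + 1) * extFn f ℓ :=
            fun ℓ _ => by rw [hK ℓ]
          rw [Finset.sum_congr rfl e1,
            ← Fin.sum_univ_eq_sum_range (fun ℓ => (ℓ + 1) * extFn f ℓ) n]
          refine Eq.trans (Finset.sum_congr rfl fun (i : Fin n) _ => ?_)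
            ((mem_cycSet le_rfl).1 hf)
          rw [extFn_coe]
        rw [hS]
    rw [hEvent]
    have hd : (↑(cycSet n n) : Set (Fin n → ℕ)).PairwiseDisjoint
        (fun f => ⋂ ℓ : ℕ, K ℓ ⁻¹' {extFn f ℓ}) := by
      intro f _ g _ hfg
      refine Set.disjoint_left.2 fun ω hωf hωg => hfg ?_
      simp only [Set.mem_iInter, Set.mem_preimage, Set.mem_singleton_iff] at hωf hωg
      funext i
      have h1 := hωf (i : ℕ)
      have h2 := hωg (i : ℕ)
      rw [extFn_coe] at h1 h2
      rw [← h1, ← h2]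
    rw [measure_biUnion_finset hd
      (fun f _ => MeasurableSet.iInter fun ℓ => (hmeas ℓ) (measurableSet_singleton _))]
    have hterm2 : ∀ f ∈ cycSet n n,
        μ (⋂ ℓ : ℕ, K ℓ ⁻¹' {extFn f ℓ})
          = ENNReal.ofReal (Real.exp (θ * Real.log p) * ((1 - p) ^ n * cycWgt θ f)) := by
      intro f hf
      rw [elem n (extFn f) (fun ℓ hℓ => extFn_ge f hℓ)]
      congr 1
      congr 1
      -- the product over range n
      rw [← Fin.prod_univ_eq_prod_range
        (fun ℓ => lam ℓ ^ extFn f ℓ / (Nat.factorial (extFn f ℓ) : ℝ)) n]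
      have hfac : ∀ i : Fin n,
          lam (i : ℕ) ^ extFn f (i : ℕ) / (Nat.factorial (extFn f (i : ℕ)) : ℝ)
            = (1 - p) ^ (((i : ℕ) + 1) * f i)
              * (θ ^ f i / ((((i : ℕ) : ℝ) + 1) ^ f i * (Nat.factorial (f i) : ℝ))) := by
        intro i
        rw [extFn_coe]
        simp only [hlam]
        rw [div_pow, mul_pow, ← pow_mul]
        have h1 : (((i : ℕ) : ℝ) + 1) ^ f i ≠ 0 := by positivity
        have h2 : (Nat.factorial (f i) : ℝ) ≠ 0 := Nat.cast_ne_zero.2 (Nat.factorial_ne_zero _)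
        field_simp
      rw [Finset.prod_congr rfl fun i _ => hfac i, Finset.prod_mul_distrib,
        Finset.prod_pow_eq_pow_sum, (mem_cycSet le_rfl).1 hf]
      rfl
    rw [Finset.sum_congr rfl hterm2,
      ← ENNReal.ofReal_sum_of_nonneg (fun f hf => by
        have := cycWgt_nonneg hθ.le f
        positivity)]
    rw [← Finset.mul_sum, ← Finset.mul_sum, cyc_sum θ n le_rfl]
    congr 1
    rw [Real.rpow_def_of_pos hp0, mul_comm (Real.log p) θ]
    ring
  refine ⟨?_, key⟩
  -- Part 1: almost sure finiteness
  have hterm_meas : ∀ ℓ : ℕ, Measurable fun ω => ((ℓ : ℝ≥0∞) + 1) * (K ℓ ω : ℝ≥0∞) :=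
    fun ℓ => (measurable_from_nat.comp (hmeas ℓ)).const_mul _
  have hg : Measurable fun ω => ∑' ℓ : ℕ, ((ℓ : ℝ≥0∞) + 1) * (K ℓ ω : ℝ≥0∞) :=
    Measurable.ennreal_tsum hterm_meas
  have hKint : ∀ ℓ : ℕ, ∫⁻ ω, (K ℓ ω : ℝ≥0∞) ∂μ = ENNReal.ofReal (lam ℓ) := by
    intro ℓ
    rw [← lintegral_map (measurable_from_nat (f := fun k : ℕ => (k : ℝ≥0∞))) (hmeas ℓ),
      lintegral_countable']
    have hmap : ∀ k : ℕ, (μ.map (K ℓ)) {k} = μ (K ℓ ⁻¹' {k}) := fun k =>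
      Measure.map_apply (hmeas ℓ) (measurableSet_singleton k)
    simp_rw [hmap, hpois']
    exact poissonMeanTsum (lam ℓ) (hlam_nonneg ℓ)
  have hint : ∫⁻ ω, (∑' ℓ : ℕ, ((ℓ : ℝ≥0∞) + 1) * (K ℓ ω : ℝ≥0∞)) ∂μ
      = ∑' ℓ : ℕ, ((ℓ : ℝ≥0∞) + 1) * ENNReal.ofReal (lam ℓ) := by
    rw [lintegral_tsum fun ℓ => (hterm_meas ℓ).aemeasurable]
    congr 1
    funext ℓ
    have hKc : Measurable fun ω => ((K ℓ ω : ℕ) : ℝ≥0∞) :=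
      measurable_from_nat.comp (hmeas ℓ)
    rw [lintegral_const_mul ((ℓ : ℝ≥0∞) + 1) hKc, hKint ℓ]
  have hfin : (∑' ℓ : ℕ, ((ℓ : ℝ≥0∞) + 1) * ENNReal.ofReal (lam ℓ)) ≠ ⊤ := by
    have heq : ∀ ℓ : ℕ, ((ℓ : ℝ≥0∞) + 1) * ENNReal.ofReal (lam ℓ)
        = ENNReal.ofReal (θ * (1 - p) ^ (ℓ + 1)) := by
      intro ℓ
      rw [show ((ℓ : ℝ≥0∞) + 1) = (((ℓ + 1 : ℕ) : ℝ≥0∞)) by push_cast; ring,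
        ← ENNReal.ofReal_natCast, ← ENNReal.ofReal_mul (by positivity)]
      congr 1
      simp only [hlam]
      have h1 : ((ℓ : ℝ) + 1) ≠ 0 := by positivity
      push_cast
      field_simp
    simp_rw [heq]
    have hsummable : Summable (fun ℓ : ℕ => θ * (1 - p) ^ (ℓ + 1)) := by
      have h2 := (summable_geometric_of_lt_one hq0.le hq1).mul_left (θ * (1 - p))
      refine h2.congr fun ℓ => ?_
      rw [pow_succ]
      ring
    rw [← ENNReal.ofReal_tsum_of_nonneg (fun ℓ => by positivity) hsummable]
    exact ENNReal.ofReal_ne_top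
  have := ae_lt_top hg (by rw [hint]; exact hfin)
  exact this.mono fun ω hω => hω.ne
end
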